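/- For all positive integers m, g and every partition μ with at most m parts, each part at most g, the map Ψ_{m,g} is a bijection from K(μ,m) onto SSOT_g(μ̂,m), and the crystal weight of T ∈ K(μ,m) equals the crystal weight of Ψ_{m,g}(T). -/

import Mathlib

open scoped Classical

namespace KingSSOT

/-! ### Partitions -/

def zeroP : ℕ → ℕ := fun _ => 0

/-- `p` is a partition: weakly decreasing row lengths, eventually zero. -/
def IsPartition (p : ℕ → ℕ) : Prop :=
  (∀ i, p (i + 1) ≤ p i) ∧ ∃ N, p N = 0

/-- number of boxes of a partition -/
noncomputable def psize (p : ℕ → ℕ) : ℕ :=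
  sSup (Set.range fun N => ∑ i ∈ Finset.range N, p i)

/-- length of the `j`-th column (columns indexed starting at 1) -/
noncomputable def colLen (p : ℕ → ℕ) (j : ℕ) : ℕ := sInf {r | p r < j}

/-! ### Oscillating horizontal strips -/

/-- apply one step of a row sequence: a positive entry `r` adds a box in (1-indexed) row `r`,
a negative entry `-r` removes a box from row `r`. -/
def applyStep (p : ℕ → ℕ) (r : ℤ) : ℕ → ℕ := fun k =>
  if (k : ℤ) + 1 = r then p k + 1 else if (k : ℤ) + 1 = -r then p k - 1 else p k

/-- the sequence of partitions of an oscillating horizontal strip with given inside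
and row sequence -/
def partsOf (p0 : ℕ → ℕ) (rows : List ℤ) : List (ℕ → ℕ) := rows.scanl applyStep p0

def outsideOf (p0 : ℕ → ℕ) (rows : List ℤ) : ℕ → ℕ := rows.foldl applyStep p0

/-- the maximal partition `S_*` of an oscillating horizontal strip -/
def starOf (p0 : ℕ → ℕ) (rows : List ℤ) : ℕ → ℕ :=
  (rows.filter fun z => decide (0 < z)).foldl applyStep p0

/-- `q` is obtained from `p` by adding one box in (0-indexed) row `i` -/
def AddBox (p q : ℕ → ℕ) (i : ℕ) : Prop := q i = p i + 1 ∧ ∀ k, k ≠ i → q k = p k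

def StepOK (p : ℕ → ℕ) (r : ℤ) : Prop :=
  (∃ i : ℕ, r = (i : ℤ) + 1 ∧ AddBox p (applyStep p r) i) ∨
  (∃ i : ℕ, r = -((i : ℤ) + 1) ∧ AddBox (applyStep p r) p i)

/-- `(p0, rows)` encodes an oscillating horizontal strip: all intermediate shapes are
partitions, all steps genuinely add/remove one box, and the row numbers are weakly
decreasing. -/
def IsOHS (p0 : ℕ → ℕ) (rows : List ℤ) : Prop :=
  IsPartition p0 ∧ List.Chain' (· ≥ ·) rows ∧
  (∀ q ∈ partsOf p0 rows, IsPartition q) ∧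
  ∀ k, k < rows.length → StepOK ((partsOf p0 rows).getD k zeroP) (rows.getD k 0)

/-- a list of partitions forms an oscillating horizontal strip -/
def IsOHSspan (l : List (ℕ → ℕ)) : Prop :=
  ∃ rows : List ℤ, IsOHS (l.headD zeroP) rows ∧ partsOf (l.headD zeroP) rows = l

/-! ### (Skew) semistandard oscillating tableaux -/

/-- data of a (skew) semistandard oscillating tableau: for each `i`, the inside partition
and the row sequence of the `(i+1)`-st oscillating horizontal strip `T^{(i+1)}`. -/
structure SSOT where
  ins : ℕ → ℕ → ℕ
  rows : ℕ → List ℤ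

def IsSSOT (T : SSOT) : Prop :=
  (∀ i, IsOHS (T.ins i) (T.rows i)) ∧
  (∀ i, T.ins (i + 1) = outsideOf (T.ins i) (T.rows i)) ∧
  ∃ N, ∀ i, N ≤ i → T.rows i = []

def OutsideIs (T : SSOT) (ν : ℕ → ℕ) : Prop := ∃ N, ∀ i, N ≤ i → T.ins i = ν

/-- every partition occurring in `T` has at most `g` columns, i.e. `c(T) ≤ g` -/
def cBound (g : ℕ) (T : SSOT) : Prop :=
  ∀ i, ∀ q ∈ partsOf (T.ins i) (T.rows i), q 0 ≤ g

def wtOf (T : SSOT) : ℕ → ℕ := fun i => (T.rows i).length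

/-- membership in `SSOT_g(ν, m)` with inside `lam` (`lam = zeroP` for honest SSOT) -/
def SSOTmem (g m : ℕ) (lam ν : ℕ → ℕ) (T : SSOT) : Prop :=
  IsSSOT T ∧ T.ins 0 = lam ∧ OutsideIs T ν ∧ (∀ i, m ≤ i → T.rows i = []) ∧ cBound g T

/-- the crystal weight `(g - α_1, …, g - α_m)` of an element of `SSOT_g(ν,m)` -/
def cwt (g : ℕ) (T : SSOT) : ℕ → ℤ := fun i => (g : ℤ) - (T.rows i).length

/-- complement `μ̂` of `μ` in the `m × g` rectangle: `μ̂_i = g - μ_{m+1-i}` -/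
def hatP (m g : ℕ) (μ : ℕ → ℕ) : ℕ → ℕ := fun i => if i < m then g - μ (m - 1 - i) else 0

/-! ### King tableaux -/

/-- A King tableau of shape `μ` for `Sp(2m)`.  The alphabet `1 < 1̄ < 2 < 2̄ < ⋯ < m < m̄`
is encoded by `i ↦ 2i-1`, `ī ↦ 2i`.  Rows and columns are 0-indexed. -/
structure King (m : ℕ) (μ : ℕ → ℕ) where
  entry : ℕ → ℕ → ℕ
  rowsWeak : ∀ r c, c + 1 < μ r → entry r c ≤ entry r (c + 1)
  colsStrict : ∀ r c, c < μ (r + 1) → entry r c < entry (r + 1) c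
  symplectic : ∀ r c, c < μ r → 2 * r + 1 ≤ entry r c
  upperBound : ∀ r c, c < μ r → entry r c ≤ 2 * m
  zeroOutside : ∀ r c, ¬ c < μ r → entry r c = 0

/-- `T` has an entry with value `v` somewhere in (0-indexed) column `c` -/
def hasEntry {m : ℕ} {μ : ℕ → ℕ} (T : King m μ) (c v : ℕ) : Prop :=
  ∃ r, c < μ r ∧ T.entry r c = v

def countEntry (m g : ℕ) {μ : ℕ → ℕ} (T : King m μ) (v : ℕ) : ℕ :=
  ((Finset.range m ×ˢ Finset.range g).filter
    (fun rc => rc.2 < μ rc.1 ∧ T.entry rc.1 rc.2 = v)).card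

/-- the crystal weight of a King tableau: `α_i = #(i) - #(ī)` (here `i` is 0-indexed). -/
def kingWt (m g : ℕ) {μ : ℕ → ℕ} (T : King m μ) : ℕ → ℤ :=
  fun i => (countEntry m g T (2 * i + 1) : ℤ) - countEntry m g T (2 * i + 2)

/-- The defining property of King's bijection `Ψ_{m,g}`: for each `i < m` (the strip
`T^{(i+1)}` of `S`), the horizontal strip `S_*/inside` has no box in (1-indexed) column `j`
iff the letter `i+1` occurs in (0-indexed) column `g-j` of the King tableau, and
`S_*/outside` has a box in column `j` iff the letter `\overline{i+1}` occurs in column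
`g-j`; moreover all partitions of the strips fit in `g` columns. -/
def PsiRel (m g : ℕ) {μ : ℕ → ℕ} (T : King m μ) (S : SSOT) : Prop :=
  ∀ i, i < m →
    (starOf (S.ins i) (S.rows i)) 0 ≤ g ∧
    ∀ j, 1 ≤ j → j ≤ g →
      ((colLen (starOf (S.ins i) (S.rows i)) j = colLen (S.ins i) j) ↔
        hasEntry T (g - j) (2 * i + 1)) ∧
      ((colLen (starOf (S.ins i) (S.rows i)) j
          = colLen (outsideOf (S.ins i) (S.rows i)) j + 1) ↔
        hasEntry T (g - j) (2 * i + 2))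



/-! ### Semistandard Young tableaux as lists of rows, Schensted insertion -/

/-- Schensted row insertion (row bumping) of a letter into a tableau:
bump the first entry strictly larger than the inserted letter. -/
def rowInsert : List (List ℕ) → ℕ → List (List ℕ)
  | [], a => [[a]]
  | r :: rest, a =>
    match r.findIdx? (fun x => decide (a < x)) with
    | none => (r ++ [a]) :: rest
    | some k => r.set k a :: rowInsert rest (r.getD k 0)

def shapeOf (Q : List (List ℕ)) : ℕ → ℕ := fun r => (Q.getD r []).length

def sizeT (Q : List (List ℕ)) : ℕ := Q.flatten.length

/-- add the entry `x` at the end of (0-indexed) row `r` -/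
def placeAt (Q : List (List ℕ)) (r x : ℕ) : List (List ℕ) :=
  if r < Q.length then Q.set r ((Q.getD r []) ++ [x]) else Q ++ [[x]]

def maxEntry (Q : List (List ℕ)) : ℕ := Q.flatten.foldr max 0

/-- remove the rightmost cell containing `x` (for `x` the largest entry of `Q`,
this is the last cell of the topmost row containing `x`). -/
def removeRM (x : ℕ) (Q : List (List ℕ)) : List (List ℕ) :=
  let r := Q.findIdx (fun row => row.contains x)
  (Q.set r ((Q.getD r []).dropLast)).filter (fun row => !row.isEmpty)

/-- repeatedly (k times) remove the rightmost cell containing the current largest entry -/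
def stripK : ℕ → List (List ℕ) → List (List ℕ)
  | 0, Q => Q
  | k + 1, Q => stripK k (removeRM (maxEntry Q) Q)

def getCol (Q : List (List ℕ)) (j : ℕ) : List ℕ := Q.filterMap (fun r => r[j]?)

def transposeT (Q : List (List ℕ)) : List (List ℕ) :=
  (List.range (Q.headD []).length).map (getCol Q)

/-- auxiliary "weak" row bumping (bump the first entry `≥ a`), used to define column
insertion via transposition. -/
def rowInsertW : List (List ℕ) → ℕ → List (List ℕ)
  | [], a => [[a]]
  | r :: rest, a =>
    match r.findIdx? (fun x => decide (a ≤ x)) with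
    | none => (r ++ [a]) :: rest
    | some k => r.set k a :: rowInsertW rest (r.getD k 0)

/-- Schensted column insertion of a letter into a semistandard tableau -/
def colInsert (Q : List (List ℕ)) (a : ℕ) : List (List ℕ) :=
  transposeT (rowInsertW (transposeT Q) a)

def IsSSYT (Q : List (List ℕ)) : Prop :=
  (∀ row ∈ Q, row ≠ [] ∧ List.Chain' (· ≤ ·) row) ∧
  List.Chain' (· ≥ ·) (Q.map List.length) ∧
  (∀ r c, c < (Q.getD (r + 1) []).length →
    (Q.getD r []).getD c 0 < (Q.getD (r + 1) []).getD c 0)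

/-! ### Matrices, two-line arrays, and column RSK -/

/-- the two-line array `w_M` of a matrix (`1`-indexed entries, support in `[1,n]²`):
top entries weakly increasing, bottom entries weakly decreasing within a fixed top entry. -/
def twoLine (M : ℕ → ℕ → ℕ) (n : ℕ) : List (ℕ × ℕ) :=
  (List.range n).flatMap fun i =>
    ((List.range n).reverse).flatMap fun j =>
      List.replicate (M (i + 1) (j + 1)) (i + 1, j + 1)

/-- the `P`-tableau of column RSK: column-insert the bottom row of `w_M` -/
def PM (M : ℕ → ℕ → ℕ) (n : ℕ) : List (List ℕ) :=
  (twoLine M n).foldl (fun Q c => colInsert Q c.2) []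

def trM (M : ℕ → ℕ → ℕ) : ℕ → ℕ → ℕ := fun p q => M q p

/-- the `Q`-tableau of column RSK: `Q(M) = P(Mᵀ)` -/
def Qm (M : ℕ → ℕ → ℕ) (n : ℕ) : List (List ℕ) := PM (trM M) n

def rowSumM (M : ℕ → ℕ → ℕ) (n i : ℕ) : ℕ := ∑ j ∈ Finset.range n, M i (j + 1)

def suppIn (M : ℕ → ℕ → ℕ) (n : ℕ) : Prop :=
  ∀ p q, M p q ≠ 0 → 1 ≤ p ∧ p ≤ n ∧ 1 ≤ q ∧ q ≤ n

/-- membership in `M̂_m^g`: symmetric, even diagonal, `c(M) ≤ 2g` -/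
def MhatMem (m g : ℕ) (M : ℕ → ℕ → ℕ) : Prop :=
  suppIn M m ∧ (∀ p q, M p q = M q p) ∧ (∀ p, 2 ∣ M p p) ∧
  ((PM M m).headD []).length ≤ 2 * g

/-! ### type-A crystal operators on tableaux -/

/-- row reading word with cell positions: rows top to bottom, right to left in each row -/
def cellsOf (Q : List (List ℕ)) : List (ℕ × ℕ × ℕ) :=
  (Q.zipIdx.map Prod.swap).flatMap fun p => ((p.2.zipIdx.map Prod.swap).reverse).map fun q => (p.1, q.1, q.2)

/-- bracketing for letters `i, i+1` along the reading word.  Returns the positions of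
unpaired letters `i+1` (chronological order) and the stack of unpaired `i`'s
(most recent first). -/
def pairState (i : ℕ) (cs : List (ℕ × ℕ × ℕ)) : List (ℕ × ℕ) × List (ℕ × ℕ) :=
  cs.foldl
    (fun st c =>
      if c.2.2 = i then (st.1, (c.1, c.2.1) :: st.2)
      else if c.2.2 = i + 1 then
        match st.2 with
        | [] => (st.1 ++ [(c.1, c.2.1)], st.2)
        | _ :: t => (st.1, t)
      else st)
    ([], [])

def setCell (Q : List (List ℕ)) (r c v : ℕ) : List (List ℕ) :=
  Q.set r ((Q.getD r []).set c v)

/-- crystal operator `e_i` on semistandard tableaux: change the last unpaired `i+1` to `i` -/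
def eT (i : ℕ) (Q : List (List ℕ)) : Option (List (List ℕ)) :=
  match (pairState i (cellsOf Q)).1.getLast? with
  | none => none
  | some rc => some (setCell Q rc.1 rc.2 i)

/-- crystal operator `f_i` on semistandard tableaux: change the first unpaired `i` to `i+1` -/
def fT (i : ℕ) (Q : List (List ℕ)) : Option (List (List ℕ)) :=
  match (pairState i (cellsOf Q)).2.getLast? with
  | none => none
  | some rc => some (setCell Q rc.1 rc.2 (i + 1))

/-! ### operators `e_i^Q`, `e_i^P` on matrices -/

/-- bottom entries of the columns of `w_M` with top entry `i`, in weakly decreasing order -/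
def rowListM (M : ℕ → ℕ → ℕ) (n i : ℕ) : List ℕ :=
  ((List.range n).reverse).flatMap fun j => List.replicate (M i (j + 1)) (j + 1)

/-- remove the first element `< q` from a weakly decreasing list (i.e. the largest one) -/
def removeLtNat (q : ℕ) : List ℕ → Option (List ℕ)
  | [] => none
  | p :: t => if p < q then some t else (removeLtNat q t).map (p :: ·)

/-- pairing `(p, q)`, `p < q`, between the (decreasingly sorted) bottom entries of rows
`i` and `i+1`; returns (unpaired elements of `A`, unpaired elements of `B`),
both in decreasing order. -/
def pairRows (A B : List ℕ) : List ℕ × List ℕ :=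
  B.foldl
    (fun st q =>
      match removeLtNat q st.1 with
      | some A' => (A', st.2)
      | none => (st.1, st.2 ++ [q]))
    (A, [])

def updM (M : ℕ → ℕ → ℕ) (a b v : ℕ) : ℕ → ℕ → ℕ :=
  fun p q => if p = a ∧ q = b then v else M p q

/-- `e_i^Q`: replace the unpaired column `(i+1; b)` of `w_M` with largest `b` by `(i; b)` -/
def eQmat (M : ℕ → ℕ → ℕ) (n i : ℕ) : Option (ℕ → ℕ → ℕ) :=
  match (pairRows (rowListM M n i) (rowListM M n (i + 1))).2.head? with
  | none => none
  | some b => some (updM (updM M (i + 1) b (M (i + 1) b - 1)) i b (M i b + 1))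

/-- `f_i^Q`: replace the unpaired column `(i; a)` of `w_M` with smallest `a` by `(i+1; a)` -/
def fQmat (M : ℕ → ℕ → ℕ) (n i : ℕ) : Option (ℕ → ℕ → ℕ) :=
  match (pairRows (rowListM M n i) (rowListM M n (i + 1))).1.getLast? with
  | none => none
  | some a => some (updM (updM M i a (M i a - 1)) (i + 1) a (M (i + 1) a + 1))

def ePmat (M : ℕ → ℕ → ℕ) (n i : ℕ) : Option (ℕ → ℕ → ℕ) :=
  (eQmat (trM M) n i).map trM

def fPmat (M : ℕ → ℕ → ℕ) (n i : ℕ) : Option (ℕ → ℕ → ℕ) :=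
  (fQmat (trM M) n i).map trM

/-- `ẽ_i = e_i^P ∘ e_i^Q` on matrices -/
def etM (M : ℕ → ℕ → ℕ) (n i : ℕ) : Option (ℕ → ℕ → ℕ) :=
  (eQmat M n i).bind fun M' => ePmat M' n i

/-- `f̃_i = f_i^P ∘ f_i^Q` on matrices -/
def ftM (M : ℕ → ℕ → ℕ) (n i : ℕ) : Option (ℕ → ℕ → ℕ) :=
  (fQmat M n i).bind fun M' => fPmat M' n i


/-! ### Φ and local operators -/


/-- standardization: concatenate the partition sequences of the strips of `T`
(up to strip `N`), dropping repeated endpoints -/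
def stdConcat (T : SSOT) (N : ℕ) : List (ℕ → ℕ) :=
  partsOf (T.ins 0) (T.rows 0) ++
    (List.range N).flatMap fun k => (partsOf (T.ins (k + 1)) (T.rows (k + 1))).tail

/-- `β_i = α_1 + ⋯ + α_i` for `α = wt(T)` -/
def betaT (T : SSOT) (i : ℕ) : ℕ := ∑ k ∈ Finset.range i, (T.rows k).length

/-- the semistandardization value of the index `p ∈ [1, m']`:
the `i` with `β_{i-1} < p ≤ β_i` -/
noncomputable def vOf (T : SSOT) (p : ℕ) : ℕ := sInf {i | p ≤ betaT T i}

/-- the recording data of the reverse row-insertion procedure along the standardization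
`lams`: `V p` are the recording tableaux, and `inv` records the involution pairs. -/
def PhiRec (lams : List (ℕ → ℕ)) (V : ℕ → List (List ℕ)) (inv : ℕ → ℕ) : Prop :=
  V 0 = [] ∧
  ∀ p, p < lams.length - 1 →
    (∃ r, AddBox (lams.getD p zeroP) (lams.getD (p + 1) zeroP) r ∧
      V (p + 1) = placeAt (V p) r (p + 1)) ∨
    (∃ r j, AddBox (lams.getD (p + 1) zeroP) (lams.getD p zeroP) r ∧
      shapeOf (V (p + 1)) = lams.getD (p + 1) zeroP ∧
      rowInsert (V (p + 1)) j = V p ∧ inv (p + 1) = j ∧ inv j = p + 1)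

/-- the graph of the map `Φ`: `M` is the semistandardization (with respect to `wt T`) of
the fixed-point-free involution `inv` produced by the reverse row-insertion recording
procedure on the standardization of `T`. -/
def PhiRel (T : SSOT) (M : ℕ → ℕ → ℕ) : Prop :=
  ∃ (N : ℕ) (V : ℕ → List (List ℕ)) (inv : ℕ → ℕ),
    (∀ i, N ≤ i → T.rows i = []) ∧
    PhiRec (stdConcat T N) V inv ∧
    ∀ a b, M a b =
      ((Finset.Icc 1 ((stdConcat T N).length - 1)).filter
        (fun p => vOf T p = a ∧ vOf T (inv p) = b)).card

/-! ### the explicit local crystal operators on SSOT -/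

def posM (l : List ℤ) : Multiset ℕ :=
  ↑(l.filterMap fun z => if 0 < z then some z.toNat else none)

def negM (l : List ℤ) : Multiset ℕ :=
  ↑(l.filterMap fun z => if z < 0 then some (-z).toNat else none)

/-- `A ↑ B = (A \ B) ⊎ ((A ∩ B) + 1)` -/
def upM (A B : Multiset ℕ) : Multiset ℕ := (A - B) + (A ∩ B).map (· + 1)

/-- `A ↓ B = (A \ B) ⊎ ((A ∩ B) - 1)` -/
def downM (A B : Multiset ℕ) : Multiset ℕ := (A - B) + (A ∩ B).map (· - 1)

/-- the multiset `C_i(T) = r⁺(T^{(i)}) ⊎ (- r̄⁻(T^{(i)}))` (paper-indexed `i ≥ 1`) -/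
def Cmul (T : SSOT) (i : ℕ) : Multiset ℤ :=
  (posM (T.rows (i - 1))).map (fun n => (n : ℤ)) +
    (upM (negM (T.rows (i - 1))) (posM (T.rows i))).map (fun n => -(n : ℤ))

/-- the multiset `D_i(T) = r̄⁺(T^{(i+1)}) ⊎ (- r⁻(T^{(i+1)}))` (paper-indexed `i ≥ 1`) -/
def Dmul (T : SSOT) (i : ℕ) : Multiset ℤ :=
  (upM (posM (T.rows i)) (negM (T.rows (i - 1)))).map (fun n => (n : ℤ)) +
    (negM (T.rows i)).map (fun n => -(n : ℤ))

noncomputable def sortDesc (s : Multiset ℤ) : List ℤ := (s.sort (· ≤ ·)).reverse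

def removeLtInt (q : ℤ) : List ℤ → Option (List ℤ)
  | [] => none
  | p :: t => if p < q then some t else (removeLtInt q t).map (p :: ·)

/-- bracketing between `C` and `D` (both sorted decreasingly): pair `p ∈ C` with `q ∈ D`
whenever `p < q`; returns the unpaired elements of `C` and of `D`, decreasingly. -/
def pairZ (A B : List ℤ) : List ℤ × List ℤ :=
  B.foldl
    (fun st q =>
      match removeLtInt q st.1 with
      | some A' => (A', st.2)
      | none => (st.1, st.2 ++ [q]))
    (A, [])

def posZ (s : Multiset ℤ) : Multiset ℕ := (s.filter (fun z => 0 < z)).map Int.toNat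
def negZ (s : Multiset ℤ) : Multiset ℕ := (s.filter (fun z => z < 0)).map (fun z => (-z).toNat)

/-- row sequence of a strip with positive part `rp` and negative part `rm` -/
noncomputable def rowsFrom (rp rm : Multiset ℕ) : List ℤ :=
  ((rp.sort (· ≤ ·)).reverse).map (fun n => (n : ℤ)) ++
    (rm.sort (· ≤ ·)).map (fun n => -(n : ℤ))

/-- rebuild strips `i-1` and `i` (0-indexed) of `T` from new multisets `C`, `D` by
inverting the `↑`-operations -/
noncomputable def rebuild (T : SSOT) (i : ℕ) (C D : Multiset ℤ) : SSOT :=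
  let rows1 := rowsFrom (posZ C) (downM (negZ C) (posZ D))
  let rows2 := rowsFrom (downM (posZ D) (negZ C)) (negZ D)
  ⟨fun j => if j = i then outsideOf (T.ins (i - 1)) rows1 else T.ins j,
   fun j => if j = i - 1 then rows1 else if j = i then rows2 else T.rows j⟩

/-- raw local operator `ẽ_i` (paper-indexed `i ≥ 1`): after bracketing, move the largest
unpaired element of `D_i(T)` into `C_i(T)` -/
noncomputable def eLoc (i : ℕ) (T : SSOT) : Option SSOT :=
  match (pairZ (sortDesc (Cmul T i)) (sortDesc (Dmul T i))).2.head? with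
  | none => none
  | some b => some (rebuild T i (b ::ₘ Cmul T i) ((Dmul T i).erase b))

/-- raw local operator `f̃_i` (paper-indexed `i ≥ 1`): after bracketing, move the smallest
unpaired element of `C_i(T)` into `D_i(T)` -/
noncomputable def fLoc (i : ℕ) (T : SSOT) : Option SSOT :=
  match (pairZ (sortDesc (Cmul T i)) (sortDesc (Dmul T i))).1.getLast? with
  | none => none
  | some a => some (rebuild T i ((Cmul T i).erase a) (a ::ₘ Dmul T i))

/-- raw local operator `ẽ_0`: delete one addition and one removal of a box in row 1
from `T^{(1)}` -/
noncomputable def e0Loc (T : SSOT) : Option SSOT :=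
  if (1 : ℤ) ∈ T.rows 0 ∧ (-1 : ℤ) ∈ T.rows 0 then
    some ⟨T.ins, fun j => if j = 0 then ((T.rows 0).erase 1).erase (-1) else T.rows j⟩
  else none

/-- raw local operator `f̃_0`: append one addition and one removal of a box in row 1
to `T^{(1)}` -/
def f0Loc (T : SSOT) : Option SSOT :=
  some ⟨T.ins, fun j =>
    if j = 0 then
      ((T.rows 0).filter fun z => decide (0 < z)) ++
        (1 :: (-1) :: ((T.rows 0).filter fun z => decide (z < 0)))
    else T.rows j⟩

/-- the local operator `ẽ_i` relative to an ambient set: the result is `0` if it is not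
in the ambient set -/
noncomputable def eStepA (amb : SSOT → Prop) (i : ℕ) (T : SSOT) : Option SSOT :=
  match (if i = 0 then e0Loc T else eLoc i T) with
  | none => none
  | some T' => if amb T' then some T' else none

noncomputable def fStepA (amb : SSOT → Prop) (i : ℕ) (T : SSOT) : Option SSOT :=
  match (if i = 0 then f0Loc T else fLoc i T) with
  | none => none
  | some T' => if amb T' then some T' else none

noncomputable def ePowA (amb : SSOT → Prop) (i : ℕ) : ℕ → SSOT → Option SSOT
  | 0, T => some T
  | k + 1, T => (eStepA amb i T).bind (ePowA amb i k)

noncomputable def fPowA (amb : SSOT → Prop) (i : ℕ) : ℕ → SSOT → Option SSOT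
  | 0, T => some T
  | k + 1, T => (fStepA amb i T).bind (fPowA amb i k)

/-- `ε_i(T) = max {k : ẽ_i^k(T) ≠ 0}` -/
noncomputable def epsA (amb : SSOT → Prop) (i : ℕ) (T : SSOT) : ℕ :=
  sSup {k | (ePowA amb i k T).isSome}

/-- `φ_i(T) = max {k : f̃_i^k(T) ≠ 0}` -/
noncomputable def phiA (amb : SSOT → Prop) (i : ℕ) (T : SSOT) : ℕ :=
  sSup {k | (fPowA amb i k T).isSome}


/-! ### Auxiliary machinery -/

section Machinery

lemma IsPartition.anti {p : ℕ → ℕ} (hp : IsPartition p) : ∀ {a b : ℕ}, a ≤ b → p b ≤ p a :=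
  fun hab => antitone_nat_of_succ_le hp.1 hab

lemma IsPartition.zero_from {p : ℕ → ℕ} (hp : IsPartition p) :
    ∃ N, ∀ r, N ≤ r → p r = 0 := by
  obtain ⟨N, hN⟩ := hp.2
  exact ⟨N, fun r hr => Nat.le_zero.mp (hN ▸ hp.anti hr)⟩

lemma colLen_le_iff {p : ℕ → ℕ} (hp : IsPartition p) {j : ℕ} (hj : 1 ≤ j) (r : ℕ) :
    colLen p j ≤ r ↔ p r < j := by
  constructor
  · intro h
    obtain ⟨N, hN⟩ := hp.zero_from
    have hne : {r | p r < j}.Nonempty := ⟨N, by simp [hN N le_rfl]; omega⟩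
    have hmem := Nat.sInf_mem hne
    calc p r ≤ p (colLen p j) := hp.anti h
    _ < j := hmem
  · intro h; exact Nat.sInf_le h

lemma lt_colLen_iff {p : ℕ → ℕ} (hp : IsPartition p) {j : ℕ} (hj : 1 ≤ j) (r : ℕ) :
    r < colLen p j ↔ j ≤ p r := by
  rw [← not_le, colLen_le_iff hp hj]; omega

lemma colLen_anti {p : ℕ → ℕ} (hp : IsPartition p) {j j' : ℕ} (h1 : 1 ≤ j) (h : j ≤ j') :
    colLen p j' ≤ colLen p j := by
  rw [colLen_le_iff hp (h1.trans h)]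
  have := (colLen_le_iff hp h1 (colLen p j)).mp le_rfl
  omega

lemma colLen_mono_of_le {p q : ℕ → ℕ} (hp : IsPartition p) (hq : IsPartition q)
    (hle : ∀ r, p r ≤ q r) {j : ℕ} (hj : 1 ≤ j) : colLen p j ≤ colLen q j := by
  rcases Nat.eq_zero_or_pos (colLen p j) with h | h
  · omega
  · have : colLen p j - 1 < colLen p j := by omega
    have hj1 := (lt_colLen_iff hp hj _).mp this
    have : j ≤ q (colLen p j - 1) := le_trans hj1 (hle _)
    have := (lt_colLen_iff hq hj _).mpr this
    omega

lemma nat_eq_of_lt_iff {x y : ℕ} (h : ∀ r, r < x ↔ r < y) : x = y := by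
  have h1 := h x; have h2 := h y; omega

lemma row_eq_card {p : ℕ → ℕ} (hp : IsPartition p) {g : ℕ} (h0 : p 0 ≤ g) (r : ℕ) :
    p r = ((Finset.Icc 1 g).filter (fun j => r < colLen p j)).card := by
  have he : (Finset.Icc 1 g).filter (fun j => r < colLen p j) = Finset.Icc 1 (p r) := by
    ext j
    simp only [Finset.mem_filter, Finset.mem_Icc]
    constructor
    · rintro ⟨⟨h1, _⟩, h3⟩; exact ⟨h1, (lt_colLen_iff hp h1 r).mp h3⟩
    · rintro ⟨h1, h2⟩
      have hrg : p r ≤ g := le_trans (hp.anti (Nat.zero_le r)) h0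
      exact ⟨⟨h1, h2.trans hrg⟩, (lt_colLen_iff hp h1 r).mpr h2⟩
  rw [he, Nat.card_Icc]; omega

lemma partition_ext_colLen {p q : ℕ → ℕ} (hp : IsPartition p) (hq : IsPartition q) {g : ℕ}
    (hpg : p 0 ≤ g) (hqg : q 0 ≤ g)
    (h : ∀ j, 1 ≤ j → j ≤ g → colLen p j = colLen q j) : p = q := by
  funext r
  rw [row_eq_card hp hpg r, row_eq_card hq hqg r]
  congr 1
  apply Finset.filter_congr
  intro j hj
  simp only [Finset.mem_Icc] at hj
  rw [h j hj.1 hj.2]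

/-! ### applyStep basics -/

lemma applyStep_pos (p : ℕ → ℕ) (i k : ℕ) :
    applyStep p ((i : ℤ) + 1) k = if k = i then p i + 1 else p k := by
  show (if ((k:ℤ)+1 = (i:ℤ)+1) then p k + 1 else if ((k:ℤ)+1 = -((i:ℤ)+1)) then p k - 1 else p k) = _
  by_cases h : k = i
  · subst h; rw [if_pos rfl, if_pos rfl]
  · rw [if_neg (by omega), if_neg (by omega), if_neg h]

lemma applyStep_neg (p : ℕ → ℕ) (i k : ℕ) :
    applyStep p (-((i : ℤ) + 1)) k = if k = i then p i - 1 else p k := by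
  show (if ((k:ℤ)+1 = -((i:ℤ)+1)) then p k + 1
    else if ((k:ℤ)+1 = -(-((i:ℤ)+1))) then p k - 1 else p k) = _
  by_cases h : k = i
  · subst h; rw [if_neg (by omega), if_pos (by omega), if_pos rfl]
  · rw [if_neg (by omega), if_neg (by omega), if_neg h]

lemma partsOf_nil (p : ℕ → ℕ) : partsOf p [] = [p] := rfl

lemma partsOf_cons (p : ℕ → ℕ) (r : ℤ) (t : List ℤ) :
    partsOf p (r :: t) = p :: partsOf (applyStep p r) t := List.scanl_cons

lemma self_mem_partsOf (p : ℕ → ℕ) (l : List ℤ) : p ∈ partsOf p l := by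
  cases l <;> simp [partsOf_nil, partsOf_cons]

lemma foldl_mem_partsOf (p : ℕ → ℕ) (l : List ℤ) :
    l.foldl applyStep p ∈ partsOf p l := by
  induction l generalizing p with
  | nil => simp [partsOf_nil]
  | cons r t ih =>
    rw [partsOf_cons, List.foldl_cons]
    exact List.mem_cons_of_mem _ (ih _)

/-- recursive form of the "all partitions + all steps OK" part of `IsOHS` -/
def OKl : (ℕ → ℕ) → List ℤ → Prop
  | _, [] => True
  | p, r :: t => StepOK p r ∧ IsPartition (applyStep p r) ∧ OKl (applyStep p r) t

lemma okl_iff_parts {p : ℕ → ℕ} {l : List ℤ} (hp : IsPartition p) :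
    ((∀ q ∈ partsOf p l, IsPartition q) ∧
      ∀ k, k < l.length → StepOK ((partsOf p l).getD k zeroP) (l.getD k 0)) ↔ OKl p l := by
  induction l generalizing p with
  | nil => simp [partsOf_nil, OKl, hp]
  | cons r t ih =>
    rw [partsOf_cons]
    constructor
    · rintro ⟨hq, hs⟩
      have h0 := hs 0 (by simp)
      simp only [List.getD_cons_zero] at h0
      have hp1 : IsPartition (applyStep p r) :=
        hq _ (List.mem_cons_of_mem _ (self_mem_partsOf _ _))
      refine ⟨h0, hp1, (ih hp1).mp ⟨fun q hq' => hq q (List.mem_cons_of_mem _ hq'), ?_⟩⟩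
      intro k hk
      have := hs (k + 1) (by simpa using Nat.succ_lt_succ hk)
      simpa using this
    · rintro ⟨h0, hp1, hok⟩
      obtain ⟨hq, hs⟩ := (ih hp1).mpr hok
      refine ⟨?_, ?_⟩
      · intro q hq'
        rcases List.mem_cons.mp hq' with rfl | hq''
        · exact hp
        · exact hq q hq''
      · intro k hk
        cases k with
        | zero => simpa using h0
        | succ k => simpa using hs k (by simpa using Nat.lt_of_succ_lt_succ hk)

lemma isOHS_iff {p : ℕ → ℕ} {l : List ℤ} :
    IsOHS p l ↔ IsPartition p ∧ List.Chain' (· ≥ ·) l ∧ OKl p l := by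
  constructor
  · rintro ⟨h1, h2, h3, h4⟩
    exact ⟨h1, h2, (okl_iff_parts h1).mp ⟨h3, h4⟩⟩
  · rintro ⟨h1, h2, h3⟩
    obtain ⟨h4, h5⟩ := (okl_iff_parts h1).mpr h3
    exact ⟨h1, h2, h4, h5⟩

end Machinery
section Machinery2

lemma okl_append {p : ℕ → ℕ} {l1 l2 : List ℤ} :
    OKl p (l1 ++ l2) ↔ OKl p l1 ∧ OKl (l1.foldl applyStep p) l2 := by
  induction l1 generalizing p with
  | nil => simp [OKl]
  | cons r t ih =>
    simp only [List.cons_append, OKl, List.foldl_cons, List.append_eq, ih, and_assoc]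

lemma okl_mem_ne_zero {p : ℕ → ℕ} {l : List ℤ} (h : OKl p l) : ∀ z ∈ l, z ≠ 0 := by
  induction l generalizing p with
  | nil => simp
  | cons r t ih =>
    obtain ⟨hs, _, hok⟩ := h
    intro z hz
    rcases List.mem_cons.mp hz with rfl | hz'
    · rcases hs with ⟨i, hi, _⟩ | ⟨i, hi, _⟩ <;> omega
    · exact ih hok z hz'

lemma okl_pos_count {p : ℕ → ℕ} {l : List ℤ} (h : OKl p l) (hpos : ∀ z ∈ l, 0 < z) (k : ℕ) :
    (l.foldl applyStep p) k = p k + l.count ((k : ℤ) + 1) := by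
  induction l generalizing p with
  | nil => simp
  | cons r t ih =>
    obtain ⟨hs, hpart, hok⟩ := h
    rcases hs with ⟨i, hi, hadd⟩ | ⟨i, hi, _⟩
    · subst hi
      rw [List.foldl_cons, ih hok (fun z hz => hpos z (List.mem_cons_of_mem _ hz))]
      by_cases hk : k = i
      · subst hk
        rw [List.count_cons_self, hadd.1]
        omega
      · rw [List.count_cons_of_ne (by omega), hadd.2 k hk]
    · exact absurd (hpos r (List.mem_cons_self)) (by omega)

lemma okl_neg_count {p : ℕ → ℕ} {l : List ℤ} (h : OKl p l) (hneg : ∀ z ∈ l, z < 0) (k : ℕ) :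
    (l.foldl applyStep p) k + l.count (-((k : ℤ) + 1)) = p k := by
  induction l generalizing p with
  | nil => simp
  | cons r t ih =>
    obtain ⟨hs, hpart, hok⟩ := h
    rcases hs with ⟨i, hi, _⟩ | ⟨i, hi, hadd⟩
    · exact absurd (hneg r (List.mem_cons_self)) (by omega)
    · subst hi
      rw [List.foldl_cons]
      have hrec := ih hok (fun z hz => hneg z (List.mem_cons_of_mem _ hz))
      by_cases hk : k = i
      · subst hk
        rw [List.count_cons_self]
        have h1 : p k = applyStep p (-((k : ℤ) + 1)) k + 1 := hadd.1
        omega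
      · rw [List.count_cons_of_ne (by omega)]
        have h2 : p k = applyStep p (-((i : ℤ) + 1)) k := hadd.2 k hk
        omega

lemma okl_pos_sandwich {p : ℕ → ℕ} {l : List ℤ} (h : OKl p l) (hpos : ∀ z ∈ l, 0 < z)
    {q : ℕ → ℕ} (hq : q ∈ partsOf p l) (k : ℕ) :
    p k ≤ q k ∧ q k ≤ (l.foldl applyStep p) k := by
  induction l generalizing p with
  | nil =>
    rw [partsOf_nil, List.mem_singleton] at hq
    subst hq; simp
  | cons r t ih =>
    obtain ⟨hs, hpart, hok⟩ := h
    have hpos' : ∀ z ∈ t, 0 < z := fun z hz => hpos z (List.mem_cons_of_mem _ hz)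
    rcases hs with ⟨i, hi, hadd⟩ | ⟨i, hi, _⟩
    · subst hi
      have hstep : ∀ j, p j ≤ applyStep p ((i : ℤ) + 1) j := by
        intro j
        by_cases hj : j = i
        · subst hj; rw [hadd.1]; omega
        · rw [hadd.2 j hj]
      rw [partsOf_cons] at hq
      rw [List.foldl_cons]
      rcases List.mem_cons.mp hq with rfl | hq'
      · refine ⟨le_refl _, ?_⟩
        have hc := okl_pos_count hok hpos' k
        calc q k ≤ applyStep q ((i : ℤ) + 1) k := hstep k
        _ ≤ _ := by omega
      · have h2 := ih hok hpos' hq'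
        exact ⟨le_trans (hstep k) h2.1, h2.2⟩
    · exact absurd (hpos r (List.mem_cons_self)) (by omega)

lemma okl_neg_sandwich {p : ℕ → ℕ} {l : List ℤ} (h : OKl p l) (hneg : ∀ z ∈ l, z < 0)
    {q : ℕ → ℕ} (hq : q ∈ partsOf p l) (k : ℕ) :
    q k ≤ p k := by
  induction l generalizing p with
  | nil =>
    rw [partsOf_nil, List.mem_singleton] at hq
    subst hq; simp
  | cons r t ih =>
    obtain ⟨hs, hpart, hok⟩ := h
    have hneg' : ∀ z ∈ t, z < 0 := fun z hz => hneg z (List.mem_cons_of_mem _ hz)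
    rcases hs with ⟨i, hi, _⟩ | ⟨i, hi, hadd⟩
    · exact absurd (hneg r (List.mem_cons_self)) (by omega)
    · subst hi
      have hstep : ∀ j, applyStep p (-((i : ℤ) + 1)) j ≤ p j := by
        intro j
        by_cases hj : j = i
        · subst hj; have := hadd.1; omega
        · rw [← hadd.2 j hj]
      rw [partsOf_cons] at hq
      rcases List.mem_cons.mp hq with rfl | hq'
      · exact le_refl _
      · exact le_trans (ih hok hneg' hq') (hstep k)

lemma okl_pos_gap {p : ℕ → ℕ} {l : List ℤ} (hp : IsPartition p) (h : OKl p l)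
    (hsort : l.Pairwise (· ≥ ·)) (hpos : ∀ z ∈ l, 0 < z) (r : ℕ)
    (hne : p (r + 1) < (l.foldl applyStep p) (r + 1)) :
    (l.foldl applyStep p) (r + 1) ≤ p r := by
  induction l generalizing p with
  | nil => simp only [List.foldl_nil] at hne; omega
  | cons a t ih =>
    obtain ⟨hs, hpart, hok⟩ := h
    have hsort' := (List.pairwise_cons.mp hsort).2
    have htle : ∀ z ∈ t, z ≤ a := (List.pairwise_cons.mp hsort).1
    have hpos' : ∀ z ∈ t, 0 < z := fun z hz => hpos z (List.mem_cons_of_mem _ hz)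
    rcases hs with ⟨i, hi, hadd⟩ | ⟨i, hi, _⟩
    swap
    · exact absurd (hpos a (List.mem_cons_self)) (by omega)
    subst hi
    rw [List.foldl_cons] at hne ⊢
    set p1 := applyStep p ((i : ℤ) + 1) with hp1
    have hcnt : ∀ k, i < k → (t.foldl applyStep p1) k = p1 k := by
      intro k hk
      rw [okl_pos_count hok hpos']
      have hnm : ((k : ℤ) + 1) ∉ t := by
        intro hmem
        have := htle _ hmem
        omega
      rw [List.count_eq_zero.mpr hnm]
      omega
    rcases Nat.lt_trichotomy (r + 1) i with hlt | heq | hgt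
    · have e1 : p1 (r + 1) = p (r + 1) := hadd.2 _ (by omega)
      have e2 : p1 r = p r := hadd.2 _ (by omega)
      have := ih hpart hok hsort' hpos' (by omega)
      omega
    · subst heq
      have e2 : p1 r = p r := hadd.2 _ (by omega)
      have hge : p1 (r + 1) ≤ (t.foldl applyStep p1) (r + 1) := by
        have := okl_pos_count hok hpos' (r + 1); omega
      rcases Nat.eq_or_lt_of_le hge with heq2 | hlt2
      · have h3 : p1 (r + 1) ≤ p1 r := hpart.1 r
        omega
      · have := ih hpart hok hsort' hpos' hlt2
        omega
    · have e1 : p1 (r + 1) = p (r + 1) := hadd.2 _ (by omega)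
      have := hcnt (r + 1) hgt
      omega

lemma okl_neg_gap {p : ℕ → ℕ} {l : List ℤ} (hp : IsPartition p) (h : OKl p l)
    (hsort : l.Pairwise (· ≥ ·)) (hneg : ∀ z ∈ l, z < 0) (r : ℕ)
    (hne : (l.foldl applyStep p) r < p r) :
    p (r + 1) ≤ (l.foldl applyStep p) r := by
  induction l generalizing p with
  | nil => simp only [List.foldl_nil] at hne; omega
  | cons a t ih =>
    obtain ⟨hs, hpart, hok⟩ := h
    have hsort' := (List.pairwise_cons.mp hsort).2
    have htle : ∀ z ∈ t, z ≤ a := (List.pairwise_cons.mp hsort).1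
    have hneg' : ∀ z ∈ t, z < 0 := fun z hz => hneg z (List.mem_cons_of_mem _ hz)
    rcases hs with ⟨i, hi, _⟩ | ⟨i, hi, hadd⟩
    · exact absurd (hneg a (List.mem_cons_self)) (by omega)
    subst hi
    rw [List.foldl_cons] at hne ⊢
    set p1 := applyStep p (-((i : ℤ) + 1)) with hp1
    have hcnt : ∀ k, k < i → (t.foldl applyStep p1) k = p1 k := by
      intro k hk
      have h2 := okl_neg_count hok hneg' k
      have hnm : (-((k : ℤ) + 1)) ∉ t := by
        intro hmem
        have := htle _ hmem
        omega
      rw [List.count_eq_zero.mpr hnm] at h2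
      omega
    rcases Nat.lt_trichotomy r i with hlt | heq | hgt
    · have e1 : p1 r = p r := (hadd.2 _ (by omega : r ≠ i)).symm
      have := hcnt r hlt
      omega
    · subst heq
      have h1 : p r = p1 r + 1 := hadd.1
      have e2 : p1 (r + 1) = p (r + 1) := (hadd.2 _ (by omega : r + 1 ≠ r)).symm
      have hle : (t.foldl applyStep p1) r ≤ p1 r := by
        have := okl_neg_count hok hneg' r; omega
      rcases Nat.eq_or_lt_of_le hle with heq2 | hlt2
      · have h3 : p1 (r + 1) ≤ p1 r := hpart.1 r
        omega
      · have := ih hpart hok hsort' hneg' hlt2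
        omega
    · have e1 : p1 r = p r := (hadd.2 _ (by omega : r ≠ i)).symm
      have e2 : p1 (r + 1) = p (r + 1) := (hadd.2 _ (by omega : r + 1 ≠ i)).symm
      have := ih hpart hok hsort' hneg' (by omega)
      omega

lemma sorted_split {l : List ℤ} (hsort : l.Pairwise (· ≥ ·)) (h0 : ∀ z ∈ l, z ≠ 0) :
    l = l.filter (fun z => decide (0 < z)) ++ l.filter (fun z => decide (z < 0)) := by
  induction l with
  | nil => simp
  | cons a t ih =>
    have hsort' := (List.pairwise_cons.mp hsort).2
    have htle : ∀ z ∈ t, z ≤ a := (List.pairwise_cons.mp hsort).1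
    have h0' : ∀ z ∈ t, z ≠ 0 := fun z hz => h0 z (List.mem_cons_of_mem _ hz)
    by_cases ha : 0 < a
    · rw [List.filter_cons_of_pos (by simpa using ha),
        List.filter_cons_of_neg (by simp only [decide_eq_true_eq]; omega)]
      rw [List.cons_append]
      rw [← ih hsort' h0']
    · have ha' : a < 0 := by have := h0 a (List.mem_cons_self); omega
      have hneg : ∀ z ∈ t, z < 0 := fun z hz => lt_of_le_of_lt (htle z hz) ha'
      rw [List.filter_cons_of_neg (by simpa using ha),
        List.filter_cons_of_pos (by simpa using ha')]
      have e1 : t.filter (fun z => decide (0 < z)) = [] := by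
        apply List.filter_eq_nil_iff.mpr
        intro z hz
        have := hneg z hz
        simp only [decide_eq_true_eq]
        omega
      have e2 : t.filter (fun z => decide (z < 0)) = t := by
        apply List.filter_eq_self.mpr
        intro z hz
        simpa using hneg z hz
      rw [e1, e2, List.nil_append]

lemma scanl_append {α β : Type*} (f : β → α → β) (a : β) (l1 l2 : List α) :
    List.scanl f a (l1 ++ l2) =
      List.scanl f a l1 ++ (List.scanl f (l1.foldl f a) l2).tail := by
  induction l1 generalizing a with
  | nil =>
    simp only [List.nil_append, List.foldl_nil]
    cases l2 <;> simp [List.scanl]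
  | cons x t ih =>
    simp only [List.cons_append, List.scanl_cons, List.foldl_cons, List.append_eq, ih,
      List.cons_append]

end Machinery2
section Build

/-- row sequence adding boxes to turn `lam` into `sig`, rows `R-1, …, 0` -/
def addRows (lam sig : ℕ → ℕ) : ℕ → List ℤ
  | 0 => []
  | R + 1 => List.replicate (sig R - lam R) ((R : ℤ) + 1) ++ addRows lam sig R

/-- row sequence removing boxes to turn `sig` into `tau`, rows `0, …, R-1` -/
def remRows (sig tau : ℕ → ℕ) : ℕ → List ℤ
  | 0 => []
  | R + 1 => remRows sig tau R ++ List.replicate (sig R - tau R) (-((R : ℤ) + 1))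

def canonRows (lam sig tau : ℕ → ℕ) (R : ℕ) : List ℤ :=
  addRows lam sig R ++ remRows sig tau R

lemma addRows_congr {lam lam' sig : ℕ → ℕ} (R : ℕ) (h : ∀ r, r < R → lam r = lam' r) :
    addRows lam sig R = addRows lam' sig R := by
  induction R with
  | zero => rfl
  | succ R ih =>
    simp only [addRows, h R (by omega), ih (fun r hr => h r (by omega))]

lemma remRows_congr {sig tau tau' : ℕ → ℕ} (R : ℕ) (h : ∀ r, r < R → tau r = tau' r) :
    remRows sig tau R = remRows sig tau' R := by
  induction R with
  | zero => rfl
  | succ R ih =>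
    simp only [remRows, h R (by omega), ih (fun r hr => h r (by omega))]

lemma foldl_replicate_pos (p : ℕ → ℕ) (i k : ℕ) :
    (List.replicate k ((i : ℤ) + 1)).foldl applyStep p =
      fun r => if r = i then p i + k else p r := by
  induction k generalizing p with
  | zero => funext r; by_cases h : r = i <;> simp [h]
  | succ k ih =>
    rw [List.replicate_succ, List.foldl_cons, ih]
    funext r
    by_cases h : r = i
    · subst h; rw [if_pos rfl, if_pos rfl, applyStep_pos, if_pos rfl]; omega
    · rw [if_neg h, if_neg h, applyStep_pos, if_neg h]

lemma foldl_replicate_neg (p : ℕ → ℕ) (i k : ℕ) :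
    (List.replicate k (-((i : ℤ) + 1))).foldl applyStep p =
      fun r => if r = i then p i - k else p r := by
  induction k generalizing p with
  | zero => funext r; by_cases h : r = i <;> simp [h]
  | succ k ih =>
    rw [List.replicate_succ, List.foldl_cons, ih]
    funext r
    by_cases h : r = i
    · subst h; rw [if_pos rfl, if_pos rfl, applyStep_neg, if_pos rfl]; omega
    · rw [if_neg h, if_neg h, applyStep_neg, if_neg h]

lemma okl_replicate_pos {p : ℕ → ℕ} (hp : IsPartition p) (i k : ℕ)
    (hub : ∀ j, j + 1 = i → p i + k ≤ p j) :
    OKl p (List.replicate k ((i : ℤ) + 1)) := by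
  induction k generalizing p with
  | zero => trivial
  | succ k ih =>
    rw [List.replicate_succ]
    have hadd : AddBox p (applyStep p ((i : ℤ) + 1)) i := by
      constructor
      · rw [applyStep_pos, if_pos rfl]
      · intro j hj; rw [applyStep_pos, if_neg hj]
    have hp1 : IsPartition (applyStep p ((i : ℤ) + 1)) := by
      constructor
      · intro r
        rw [applyStep_pos, applyStep_pos]
        by_cases h1 : r + 1 = i
        · rw [if_pos h1, if_neg (by omega)]
          have := hub r h1
          omega
        · by_cases h2 : r = i
          · rw [if_neg h1, if_pos h2, ← h2]
            have := hp.1 r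
            omega
          · rw [if_neg h1, if_neg h2]; exact hp.1 r
      · obtain ⟨N, hN⟩ := hp.zero_from
        refine ⟨N + i + 1, ?_⟩
        rw [applyStep_pos, if_neg (by omega)]
        exact hN _ (by omega)
    refine ⟨Or.inl ⟨i, rfl, hadd⟩, hp1, ih hp1 ?_⟩
    intro j hj
    rw [applyStep_pos, applyStep_pos, if_pos rfl, if_neg (by omega)]
    have := hub j hj
    omega

lemma okl_replicate_neg {p : ℕ → ℕ} (hp : IsPartition p) (i k : ℕ)
    (hk : k ≤ p i) (hlb : p (i + 1) ≤ p i - k) :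
    OKl p (List.replicate k (-((i : ℤ) + 1))) := by
  induction k generalizing p with
  | zero => trivial
  | succ k ih =>
    rw [List.replicate_succ]
    have hadd : AddBox (applyStep p (-((i : ℤ) + 1))) p i := by
      constructor
      · rw [applyStep_neg, if_pos rfl]; omega
      · intro j hj; rw [applyStep_neg, if_neg hj]
    have hp1 : IsPartition (applyStep p (-((i : ℤ) + 1))) := by
      constructor
      · intro r
        rw [applyStep_neg, applyStep_neg]
        by_cases h1 : r + 1 = i
        · rw [if_pos h1, if_neg (by omega)]
          have h3 := hp.1 r
          rw [h1] at h3
          omega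
        · by_cases h2 : r = i
          · rw [if_neg h1, if_pos h2]
            subst h2
            have h3 := hp.1 r
            omega
          · rw [if_neg h1, if_neg h2]; exact hp.1 r
      · obtain ⟨N, hN⟩ := hp.zero_from
        refine ⟨N + i + 1, ?_⟩
        rw [applyStep_neg, if_neg (by omega)]
        exact hN _ (by omega)
    refine ⟨Or.inr ⟨i, rfl, hadd⟩, hp1, ih hp1 ?_ ?_⟩
    · rw [applyStep_neg, if_pos rfl]; omega
    · rw [applyStep_neg, applyStep_neg, if_pos rfl, if_neg (by omega)]
      omega

lemma build_add {sig : ℕ → ℕ} (hsig : IsPartition sig) :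
    ∀ (R : ℕ) (lam : ℕ → ℕ), IsPartition lam → (∀ r, lam r ≤ sig r) →
    (∀ r, sig (r + 1) ≤ lam r) → (∀ r, R ≤ r → sig r = lam r) →
    OKl lam (addRows lam sig R) ∧
    (addRows lam sig R).foldl applyStep lam = sig ∧
    (∀ z ∈ addRows lam sig R, 0 < z ∧ z ≤ R) ∧
    (addRows lam sig R).Pairwise (· ≥ ·) := by
  intro R
  induction R with
  | zero =>
    intro lam hlam hle hgap hsupp
    refine ⟨trivial, ?_, by simp [addRows], by simp [addRows]⟩
    funext r
    exact (hsupp r (by omega)).symm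
  | succ R ih =>
    intro lam hlam hle hgap hsupp
    have hub : ∀ j, j + 1 = R → lam R + (sig R - lam R) ≤ lam j := by
      intro j hj
      have h1 := hle R
      have h2 := hgap j
      rw [hj] at h2
      omega
    have hok1 : OKl lam (List.replicate (sig R - lam R) ((R : ℤ) + 1)) :=
      okl_replicate_pos hlam R _ hub
    have hfold : (List.replicate (sig R - lam R) ((R : ℤ) + 1)).foldl applyStep lam =
        fun r => if r = R then sig R else lam r := by
      rw [foldl_replicate_pos]
      funext r
      by_cases h : r = R
      · rw [if_pos h, if_pos h]
        have := hle R; omega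
      · rw [if_neg h, if_neg h]
    set lamUp : ℕ → ℕ := fun r => if r = R then sig R else lam r with hlamUp
    have hlamUpP : IsPartition lamUp := by
      constructor
      · intro r
        simp only [hlamUp]
        by_cases h1 : r + 1 = R
        · rw [if_pos h1, if_neg (by omega)]
          have := hgap r; rw [h1] at this; exact this
        · by_cases h2 : r = R
          · rw [if_neg h1, if_pos h2, h2]
            have h3 := hlam.1 r; rw [h2] at h3
            have := hle R
            omega
          · rw [if_neg h1, if_neg h2]; exact hlam.1 r
      · obtain ⟨N, hN⟩ := hlam.zero_from
        obtain ⟨M, hM⟩ := hsig.zero_from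
        refine ⟨N + M + R + 1, ?_⟩
        simp only [hlamUp]
        rw [if_neg (by omega)]
        exact hN _ (by omega)
    have ihres := ih lamUp hlamUpP
      (by intro r; simp only [hlamUp]; by_cases h : r = R
          · rw [if_pos h, h]
          · rw [if_neg h]; exact hle r)
      (by intro r; simp only [hlamUp]; by_cases h : r = R
          · rw [if_pos h, h]; exact hsig.1 R
          · rw [if_neg h]; exact hgap r)
      (by intro r hr; simp only [hlamUp]; by_cases h : r = R
          · rw [if_pos h, h]
          · rw [if_neg h]; exact hsupp r (by omega))
    have hcongr : addRows lamUp sig R = addRows lam sig R := by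
      apply addRows_congr
      intro r hr
      simp only [hlamUp]
      rw [if_neg (by omega)]
    rw [hcongr] at ihres
    obtain ⟨ih1, ih2, ih3, ih4⟩ := ihres
    have hAR : addRows lam sig (R + 1) =
        List.replicate (sig R - lam R) ((R : ℤ) + 1) ++ addRows lam sig R := rfl
    refine ⟨?_, ?_, ?_, ?_⟩
    · rw [hAR, okl_append, hfold]
      exact ⟨hok1, ih1⟩
    · rw [hAR, List.foldl_append, hfold, ih2]
    · rw [hAR]
      intro z hz
      rcases List.mem_append.mp hz with hz1 | hz2
      · have := List.eq_of_mem_replicate hz1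
        subst this
        constructor <;> omega
      · have := ih3 z hz2
        constructor <;> omega
    · rw [hAR, List.pairwise_append]
      refine ⟨List.pairwise_replicate.mpr (Or.inr le_rfl), ih4, ?_⟩
      intro x hx y hy
      have hx' := List.eq_of_mem_replicate hx
      have hy' := ih3 y hy
      subst hx'
      omega

lemma build_rem {sig : ℕ → ℕ} (hsig : IsPartition sig) :
    ∀ (R : ℕ) (tau : ℕ → ℕ), IsPartition tau → (∀ r, tau r ≤ sig r) →
    (∀ r, sig (r + 1) ≤ tau r) → (∀ r, R ≤ r → sig r = tau r) →
    OKl sig (remRows sig tau R) ∧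
    (remRows sig tau R).foldl applyStep sig = tau ∧
    (∀ z ∈ remRows sig tau R, z < 0 ∧ -(R : ℤ) ≤ z) ∧
    (remRows sig tau R).Pairwise (· ≥ ·) := by
  intro R
  induction R with
  | zero =>
    intro tau htau hle hgap hsupp
    refine ⟨trivial, ?_, by simp [remRows], by simp [remRows]⟩
    funext r
    exact hsupp r (by omega)
  | succ R ih =>
    intro tau htau hle hgap hsupp
    set tauUp : ℕ → ℕ := fun r => if r = R then sig R else tau r with htauUp
    have htauUpP : IsPartition tauUp := by
      constructor
      · intro r
        simp only [htauUp]
        by_cases h1 : r + 1 = R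
        · rw [if_pos h1, if_neg (by omega)]
          have := hgap r; rw [h1] at this; exact this
        · by_cases h2 : r = R
          · rw [if_neg h1, if_pos h2, h2]
            have h3 := hsig.1 R
            have := hle (R + 1)
            omega
          · rw [if_neg h1, if_neg h2]; exact htau.1 r
      · obtain ⟨N, hN⟩ := htau.zero_from
        obtain ⟨M, hM⟩ := hsig.zero_from
        refine ⟨N + M + R + 1, ?_⟩
        simp only [htauUp]
        rw [if_neg (by omega)]
        exact hN _ (by omega)
    have ihres := ih tauUp htauUpP
      (by intro r; simp only [htauUp]; by_cases h : r = R
          · rw [if_pos h, h]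
          · rw [if_neg h]; exact hle r)
      (by intro r; simp only [htauUp]; by_cases h : r = R
          · rw [if_pos h, h]; exact hsig.1 R
          · rw [if_neg h]; exact hgap r)
      (by intro r hr; simp only [htauUp]; by_cases h : r = R
          · rw [if_pos h, h]
          · rw [if_neg h]; exact hsupp r (by omega))
    have hcongr : remRows sig tauUp R = remRows sig tau R := by
      apply remRows_congr
      intro r hr
      simp only [htauUp]
      rw [if_neg (by omega)]
    rw [hcongr] at ihres
    obtain ⟨ih1, ih2, ih3, ih4⟩ := ihres
    have hRR : remRows sig tau (R + 1) =
        remRows sig tau R ++ List.replicate (sig R - tau R) (-((R : ℤ) + 1)) := rfl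
    have e1 : tauUp R = sig R := by simp [htauUp]
    have e2 : tauUp (R + 1) = tau (R + 1) := by simp [htauUp]
    have hokrep : OKl tauUp (List.replicate (sig R - tau R) (-((R : ℤ) + 1))) := by
      apply okl_replicate_neg htauUpP
      · rw [e1]; omega
      · rw [e1, e2, Nat.sub_sub_self (hle R)]
        exact htau.1 R
    have hfoldrep : (List.replicate (sig R - tau R) (-((R : ℤ) + 1))).foldl applyStep tauUp
        = tau := by
      rw [foldl_replicate_neg]
      funext r
      by_cases h : r = R
      · rw [if_pos h, h, e1]
        have := hle R
        omega
      · rw [if_neg h]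
        simp [htauUp, h]
    refine ⟨?_, ?_, ?_, ?_⟩
    · rw [hRR, okl_append, ih2]
      exact ⟨ih1, hokrep⟩
    · rw [hRR, List.foldl_append, ih2, hfoldrep]
    · rw [hRR]
      intro z hz
      rcases List.mem_append.mp hz with hz1 | hz2
      · have := ih3 z hz1
        constructor <;> omega
      · have := List.eq_of_mem_replicate hz2
        subst this
        constructor <;> omega
    · rw [hRR, List.pairwise_append]
      refine ⟨ih4, List.pairwise_replicate.mpr (Or.inr le_rfl), ?_⟩
      intro x hx y hy
      have hy' := List.eq_of_mem_replicate hy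
      have hx' := ih3 x hx
      subst hy'
      omega

lemma build_main {lam sig tau : ℕ → ℕ} (R : ℕ) (hlam : IsPartition lam)
    (hsig : IsPartition sig) (htau : IsPartition tau)
    (hls : ∀ r, lam r ≤ sig r) (hts : ∀ r, tau r ≤ sig r)
    (hgl : ∀ r, sig (r + 1) ≤ lam r) (hgt : ∀ r, sig (r + 1) ≤ tau r)
    (hsuppl : ∀ r, R ≤ r → sig r = lam r) (hsuppt : ∀ r, R ≤ r → sig r = tau r) :
    IsOHS lam (canonRows lam sig tau R) ∧
    outsideOf lam (canonRows lam sig tau R) = tau ∧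
    starOf lam (canonRows lam sig tau R) = sig ∧
    (∀ q ∈ partsOf lam (canonRows lam sig tau R), ∀ k, q k ≤ sig k) := by
  obtain ⟨a1, a2, a3, a4⟩ := build_add hsig R lam hlam hls hgl hsuppl
  obtain ⟨b1, b2, b3, b4⟩ := build_rem hsig R tau htau hts hgt hsuppt
  have hfilpos : (canonRows lam sig tau R).filter (fun z => decide (0 < z)) =
      addRows lam sig R := by
    rw [canonRows, List.filter_append,
      List.filter_eq_self.mpr (fun z hz => by simpa using (a3 z hz).1),
      List.filter_eq_nil_iff.mpr (fun z hz => by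
        have := (b3 z hz).1
        simp only [decide_eq_true_eq]
        omega),
      List.append_nil]
  have hok : OKl lam (canonRows lam sig tau R) := by
    rw [canonRows, okl_append, a2]
    exact ⟨a1, b1⟩
  have hpw : (canonRows lam sig tau R).Pairwise (· ≥ ·) := by
    rw [canonRows, List.pairwise_append]
    refine ⟨a4, b4, ?_⟩
    intro x hx y hy
    have h1 := (a3 x hx).1
    have h2 := (b3 y hy).1
    omega
  have hstar : starOf lam (canonRows lam sig tau R) = sig := by
    rw [starOf, hfilpos, a2]
  have hout : outsideOf lam (canonRows lam sig tau R) = tau := by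
    rw [outsideOf, canonRows, List.foldl_append, a2, b2]
  refine ⟨isOHS_iff.mpr ⟨hlam, List.isChain_iff_pairwise.mpr hpw, hok⟩, hout, hstar, ?_⟩
  intro q hq k
  rw [canonRows, partsOf, scanl_append, a2] at hq
  rcases List.mem_append.mp hq with hq1 | hq2
  · exact (okl_pos_sandwich a1 (fun z hz => (a3 z hz).1) hq1 k).2.trans (by rw [a2])
  · have hq3 : q ∈ partsOf sig (remRows sig tau R) := List.mem_of_mem_tail hq2
    exact okl_neg_sandwich b1 (fun z hz => (b3 z hz).1) hq3 k

lemma addRows_length (lam sig : ℕ → ℕ) (R : ℕ) :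
    (addRows lam sig R).length = ∑ r ∈ Finset.range R, (sig r - lam r) := by
  induction R with
  | zero => simp [addRows]
  | succ R ih =>
    rw [Finset.sum_range_succ]
    simp only [addRows, List.length_append, List.length_replicate, ih]
    omega

lemma remRows_length (sig tau : ℕ → ℕ) (R : ℕ) :
    (remRows sig tau R).length = ∑ r ∈ Finset.range R, (sig r - tau r) := by
  induction R with
  | zero => simp [remRows]
  | succ R ih =>
    rw [Finset.sum_range_succ]
    simp only [remRows, List.length_append, List.length_replicate, ih]

end Build
section Analyze

lemma okl_foldl_part {p : ℕ → ℕ} {l : List ℤ} (hp : IsPartition p) (h : OKl p l) :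
    IsPartition (l.foldl applyStep p) := by
  induction l generalizing p with
  | nil => exact hp
  | cons r t ih =>
    obtain ⟨_, hpart, hok⟩ := h
    exact ih hpart hok

/-- packaged analysis of an arbitrary oscillating horizontal strip -/
structure OHSdata (p : ℕ → ℕ) (l : List ℤ) : Prop where
  okP : OKl p (l.filter (fun z => decide (0 < z)))
  okN : OKl (starOf p l) (l.filter (fun z => decide (z < 0)))
  out_eq : (l.filter (fun z => decide (z < 0))).foldl applyStep (starOf p l) = outsideOf p l
  star_part : IsPartition (starOf p l)
  out_part : IsPartition (outsideOf p l)
  le_star : ∀ k, p k ≤ starOf p l k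
  out_le_star : ∀ k, outsideOf p l k ≤ starOf p l k
  gap_pos : ∀ r, p (r + 1) < starOf p l (r + 1) → starOf p l (r + 1) ≤ p r
  gap_neg : ∀ r, outsideOf p l r < starOf p l r → starOf p l (r + 1) ≤ outsideOf p l r
  cnt_pos : ∀ k, starOf p l k = p k + l.count ((k : ℤ) + 1)
  cnt_neg : ∀ k, outsideOf p l k + l.count (-((k : ℤ) + 1)) = starOf p l k

lemma ohs_analyze {p : ℕ → ℕ} {l : List ℤ} (h : IsOHS p l) : OHSdata p l := by
  obtain ⟨hp, hchain, hok⟩ := isOHS_iff.mp h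
  have hpw : l.Pairwise (· ≥ ·) := List.isChain_iff_pairwise.mp hchain
  have h0 : ∀ z ∈ l, z ≠ 0 := okl_mem_ne_zero hok
  set P := l.filter (fun z => decide (0 < z)) with hP
  set N := l.filter (fun z => decide (z < 0)) with hN
  have hsplit : l = P ++ N := sorted_split hpw h0
  have hPpos : ∀ z ∈ P, 0 < z := by
    intro z hz; rw [hP] at hz; simpa using (List.of_mem_filter hz)
  have hNneg : ∀ z ∈ N, z < 0 := by
    intro z hz; rw [hN] at hz; simpa using (List.of_mem_filter hz)
  have hokPN : OKl p P ∧ OKl (P.foldl applyStep p) N := by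
    rw [← okl_append, ← hsplit]; exact hok
  have hstar : P.foldl applyStep p = starOf p l := rfl
  have hout : N.foldl applyStep (starOf p l) = outsideOf p l := by
    rw [outsideOf]
    conv_rhs => rw [hsplit]
    rw [List.foldl_append, hstar]
  have hpwP : P.Pairwise (· ≥ ·) := List.Pairwise.filter _ hpw
  have hpwN : N.Pairwise (· ≥ ·) := List.Pairwise.filter _ hpw
  have hokP := hokPN.1
  have hokN : OKl (starOf p l) N := by rw [← hstar]; exact hokPN.2
  have hstar_part : IsPartition (starOf p l) := by
    rw [← hstar]; exact okl_foldl_part hp hokP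
  have hout_part : IsPartition (outsideOf p l) := by
    rw [← hout]; exact okl_foldl_part hstar_part hokN
  have hcntP : ∀ k, starOf p l k = p k + P.count ((k : ℤ) + 1) := by
    intro k; rw [← hstar]; exact okl_pos_count hokP hPpos k
  have hcntN : ∀ k, outsideOf p l k + N.count (-((k : ℤ) + 1)) = starOf p l k := by
    intro k; rw [← hout]; exact okl_neg_count hokN hNneg k
  refine ⟨hokP, hokN, hout, hstar_part, hout_part, ?_, ?_, ?_, ?_, ?_, ?_⟩
  · intro k; rw [hcntP k]; omega
  · intro k; have := hcntN k; omega
  · intro r hr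
    have := okl_pos_gap hp hokP hpwP hPpos r
    rw [hstar] at this
    exact this hr
  · intro r hr
    have := okl_neg_gap hstar_part hokN hpwN hNneg r
    rw [hout] at this
    exact this hr
  · intro k
    have hNzero : N.count ((k : ℤ) + 1) = 0 :=
      List.count_eq_zero.mpr (fun hm => by have := hNneg _ hm; omega)
    have hcl : l.count ((k : ℤ) + 1) = P.count ((k : ℤ) + 1) := by
      conv_lhs => rw [hsplit]
      rw [List.count_append, hNzero, Nat.add_zero]
    rw [hcl]; exact hcntP k
  · intro k
    have hPzero : P.count (-((k : ℤ) + 1)) = 0 :=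
      List.count_eq_zero.mpr (fun hm => by have := hPpos _ hm; omega)
    have hcl : l.count (-((k : ℤ) + 1)) = N.count (-((k : ℤ) + 1)) := by
      conv_lhs => rw [hsplit]
      rw [List.count_append, hPzero, Nat.zero_add]
    rw [hcl]; exact hcntN k

instance : IsAntisymm ℤ (· ≥ ·) := ⟨fun _ _ h1 h2 => le_antisymm h2 h1⟩

lemma rows_unique {p : ℕ → ℕ} {l1 l2 : List ℤ} (h1 : IsOHS p l1) (h2 : IsOHS p l2)
    (hstar : starOf p l1 = starOf p l2) (hout : outsideOf p l1 = outsideOf p l2) :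
    l1 = l2 := by
  have d1 := ohs_analyze h1
  have d2 := ohs_analyze h2
  have hpw1 : l1.Pairwise (· ≥ ·) := List.isChain_iff_pairwise.mp (isOHS_iff.mp h1).2.1
  have hpw2 : l2.Pairwise (· ≥ ·) := List.isChain_iff_pairwise.mp (isOHS_iff.mp h2).2.1
  have h01 : ∀ z ∈ l1, z ≠ 0 := okl_mem_ne_zero (isOHS_iff.mp h1).2.2
  have h02 : ∀ z ∈ l2, z ≠ 0 := okl_mem_ne_zero (isOHS_iff.mp h2).2.2
  have hcount : ∀ z : ℤ, l1.count z = l2.count z := by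
    intro z
    rcases lt_trichotomy z 0 with hz | hz | hz
    · obtain ⟨k, hk⟩ : ∃ k : ℕ, z = -((k : ℤ) + 1) := ⟨(-z - 1).toNat, by omega⟩
      subst hk
      have e1 := d1.cnt_neg k
      have e2 := d2.cnt_neg k
      rw [hstar, hout] at e1
      omega
    · subst hz
      rw [List.count_eq_zero.mpr (fun hm => h01 _ hm rfl),
        List.count_eq_zero.mpr (fun hm => h02 _ hm rfl)]
    · obtain ⟨k, hk⟩ : ∃ k : ℕ, z = (k : ℤ) + 1 := ⟨(z - 1).toNat, by omega⟩
      subst hk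
      have e1 := d1.cnt_pos k
      have e2 := d2.cnt_pos k
      rw [hstar] at e1
      omega
  have hperm : l1.Perm l2 := by
    rw [← Multiset.coe_eq_coe]
    apply Multiset.ext.mpr
    intro a
    simpa [Multiset.coe_count] using hcount a
  exact List.Perm.eq_of_pairwise (fun a b _ _ h1 h2 => le_antisymm h2 h1) hpw1 hpw2 hperm

lemma colLen_diff_le_add {lam sig : ℕ → ℕ} (hlam : IsPartition lam) (hsig : IsPartition sig)
    (hle : ∀ r, lam r ≤ sig r) (hgap : ∀ r, lam (r + 1) < sig (r + 1) → sig (r + 1) ≤ lam r)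
    {j : ℕ} (hj : 1 ≤ j) : colLen sig j ≤ colLen lam j + 1 := by
  by_contra hcon
  push_neg at hcon
  set r := colLen lam j with hr
  have h1 : lam r < j := (colLen_le_iff hlam hj r).mp le_rfl
  have h2 : j ≤ sig (r + 1) := (lt_colLen_iff hsig hj (r + 1)).mp (by omega)
  have h3 : lam (r + 1) ≤ lam r := hlam.1 r
  have := hgap r (by omega)
  omega

lemma colLen_diff_le_rem {sig tau : ℕ → ℕ} (hsig : IsPartition sig) (htau : IsPartition tau)
    (hle : ∀ r, tau r ≤ sig r) (hgap : ∀ r, tau r < sig r → sig (r + 1) ≤ tau r)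
    {j : ℕ} (hj : 1 ≤ j) : colLen sig j ≤ colLen tau j + 1 := by
  by_contra hcon
  push_neg at hcon
  set r := colLen tau j with hr
  have h1 : tau r < j := (colLen_le_iff htau hj r).mp le_rfl
  have h2 : j ≤ sig (r + 1) := (lt_colLen_iff hsig hj (r + 1)).mp (by omega)
  have h2' : j ≤ sig r := (lt_colLen_iff hsig hj r).mp (by omega)
  have := hgap r (by omega)
  omega

end Analyze
section KingSide

variable {m g : ℕ} {μ : ℕ → ℕ}

/-- number of entries `≤ v` in column `c` of `T` -/
noncomputable def cntle (T : King m μ) (v c : ℕ) : ℕ :=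
  ((Finset.range m).filter (fun r => c < μ r ∧ T.entry r c ≤ v)).card

/-- the intermediate shape attached to letter threshold `v` -/
noncomputable def Fshape (T : King m μ) (g v : ℕ) : ℕ → ℕ := fun r =>
  ((Finset.range g).filter (fun c => cntle T v c + r + 1 ≤ (v + 1) / 2)).card

lemma entry_strict_col (T : King m μ) (hpart : IsPartition μ) {r1 r2 c : ℕ}
    (h : r1 < r2) (hc : c < μ r2) : T.entry r1 c < T.entry r2 c := by
  induction r2 with
  | zero => omega
  | succ r2 ih =>
    have hc2 : c < μ r2 := lt_of_lt_of_le hc (hpart.1 r2)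
    have hstep := T.colsStrict r2 c hc
    rcases Nat.lt_or_ge r1 r2 with h1 | h1
    · exact lt_trans (ih h1 hc2) hstep
    · have he : r1 = r2 := by omega
      subst he; exact hstep

lemma cntle_le (T : King m μ) (v c : ℕ) : cntle T v c ≤ (v + 1) / 2 := by
  rw [cntle]
  have hsub : (Finset.range m).filter (fun r => c < μ r ∧ T.entry r c ≤ v)
      ⊆ Finset.range ((v + 1) / 2) := by
    intro r hr
    simp only [Finset.mem_filter, Finset.mem_range] at hr ⊢
    have := T.symplectic r c hr.2.1
    omega
  calc _ ≤ _ := Finset.card_le_card hsub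
  _ = (v + 1) / 2 := Finset.card_range _

lemma cntle_anti (T : King m μ) (v : ℕ) {c c' : ℕ} (h : c ≤ c') :
    cntle T v c' ≤ cntle T v c := by
  have step : ∀ d, cntle T v (d + 1) ≤ cntle T v d := by
    intro d
    apply Finset.card_le_card
    intro r hr
    simp only [Finset.mem_filter] at hr ⊢
    obtain ⟨h1, h2, h3⟩ := hr
    have hd : d < μ r := by omega
    exact ⟨h1, hd, le_trans (T.rowsWeak r d h2) h3⟩
  exact antitone_nat_of_succ_le step h

lemma cntle_mono_v (T : King m μ) {v v' : ℕ} (h : v ≤ v') (c : ℕ) :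
    cntle T v c ≤ cntle T v' c := by
  apply Finset.card_le_card
  intro r hr
  simp only [Finset.mem_filter] at hr ⊢
  exact ⟨hr.1, hr.2.1, hr.2.2.trans h⟩

lemma cntle_succ (T : King m μ) (hpart : IsPartition μ) (hlen : ∀ i, m ≤ i → μ i = 0)
    (v c : ℕ) :
    cntle T (v + 1) c = cntle T v c + (if hasEntry T c (v + 1) then 1 else 0) := by
  have hsplit : (Finset.range m).filter (fun r => c < μ r ∧ T.entry r c ≤ v + 1)
      = (Finset.range m).filter (fun r => c < μ r ∧ T.entry r c ≤ v)
        ∪ (Finset.range m).filter (fun r => c < μ r ∧ T.entry r c = v + 1) := by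
    ext r
    simp only [Finset.mem_union, Finset.mem_filter]
    constructor
    · rintro ⟨h1, h2, h3⟩
      rcases Nat.lt_or_ge (T.entry r c) (v + 1) with h4 | h4
      · exact Or.inl ⟨h1, h2, by omega⟩
      · exact Or.inr ⟨h1, h2, by omega⟩
    · rintro (⟨h1, h2, h3⟩ | ⟨h1, h2, h3⟩) <;> exact ⟨h1, h2, by omega⟩
  have hdisj : Disjoint ((Finset.range m).filter (fun r => c < μ r ∧ T.entry r c ≤ v))
      ((Finset.range m).filter (fun r => c < μ r ∧ T.entry r c = v + 1)) := by
    rw [Finset.disjoint_left]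
    intro r h1 h2
    simp only [Finset.mem_filter] at h1 h2
    omega
  rw [cntle, hsplit, Finset.card_union_of_disjoint hdisj]
  congr 1
  by_cases hE : hasEntry T c (v + 1)
  · rw [if_pos hE]
    obtain ⟨r, hr1, hr2⟩ := hE
    have hrm : r < m := by
      by_contra hcon
      push_neg at hcon
      rw [hlen r hcon] at hr1
      omega
    apply Finset.card_eq_one.mpr
    refine ⟨r, ?_⟩
    ext r'
    simp only [Finset.mem_filter, Finset.mem_range, Finset.mem_singleton]
    constructor
    · rintro ⟨h1, h2, h3⟩
      by_contra hne
      rcases Nat.lt_or_ge r' r with hlt | hge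
      · have := entry_strict_col T hpart hlt hr1; omega
      · have := entry_strict_col T hpart (show r < r' by omega) h2; omega
    · rintro rfl
      exact ⟨hrm, hr1, hr2⟩
  · rw [if_neg hE]
    apply Finset.card_eq_zero.mpr
    apply Finset.filter_false_of_mem
    intro r _
    intro hcon
    exact hE ⟨r, hcon.1, hcon.2⟩

lemma Fshape_le_g (T : King m μ) (g v r : ℕ) : Fshape T g v r ≤ g := by
  calc Fshape T g v r ≤ (Finset.range g).card := Finset.card_le_card (Finset.filter_subset _ _)
  _ = g := Finset.card_range g

lemma Fshape_zero_row (T : King m μ) (g v : ℕ) {r : ℕ} (h : (v + 1) / 2 ≤ r) :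
    Fshape T g v r = 0 := by
  rw [Fshape]
  apply Finset.card_eq_zero.mpr
  apply Finset.filter_false_of_mem
  intro c _
  omega

lemma Fshape_part (T : King m μ) (g v : ℕ) : IsPartition (Fshape T g v) := by
  constructor
  · intro r
    apply Finset.card_le_card
    intro c hc
    simp only [Finset.mem_filter] at hc ⊢
    exact ⟨hc.1, by omega⟩
  · exact ⟨(v + 1) / 2, Fshape_zero_row T g v le_rfl⟩

lemma Fshape_v0 (T : King m μ) (g : ℕ) : Fshape T g 0 = zeroP := by
  funext r
  rw [Fshape, zeroP]
  apply Finset.card_eq_zero.mpr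
  apply Finset.filter_false_of_mem
  intro c _
  omega

lemma Fshape_colLen (T : King m μ) {v j : ℕ} (hj1 : 1 ≤ j) (hjg : j ≤ g) :
    colLen (Fshape T g v) j = (v + 1) / 2 - cntle T v (g - j) := by
  have hF := Fshape_part T g v
  have ha := cntle_le T v (g - j)
  apply nat_eq_of_lt_iff
  intro r
  rw [lt_colLen_iff hF hj1]
  constructor
  · intro hle
    by_contra hcon
    push_neg at hcon
    have hsub : (Finset.range g).filter (fun c => cntle T v c + r + 1 ≤ (v + 1) / 2)
        ⊆ Finset.Ico (g - j + 1) g := by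
      intro c hc
      simp only [Finset.mem_filter, Finset.mem_range] at hc
      simp only [Finset.mem_Ico]
      refine ⟨?_, hc.1⟩
      by_contra hc2
      push_neg at hc2
      have := cntle_anti T v (show c ≤ g - j by omega)
      omega
    have := Finset.card_le_card hsub
    rw [Nat.card_Ico] at this
    rw [Fshape] at hle
    omega
  · intro hlt
    have hsub : Finset.Ico (g - j) g
        ⊆ (Finset.range g).filter (fun c => cntle T v c + r + 1 ≤ (v + 1) / 2) := by
      intro c hc
      simp only [Finset.mem_Ico] at hc
      simp only [Finset.mem_filter, Finset.mem_range]
      have := cntle_anti T v hc.1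
      exact ⟨hc.2, by omega⟩
    have := Finset.card_le_card hsub
    rw [Nat.card_Ico] at this
    rw [Fshape]
    omega

lemma Fshape_top (T : King m μ) (hpart : IsPartition μ) (hlen : ∀ i, m ≤ i → μ i = 0)
    (hcol : ∀ i, μ i ≤ g) :
    Fshape T g (2 * m) = hatP m g μ := by
  have hcnt : ∀ c, cntle T (2 * m) c = ((Finset.range m).filter (fun r' => c < μ r')).card := by
    intro c
    rw [cntle]
    congr 1
    apply Finset.filter_congr
    intro r' _
    constructor
    · rintro ⟨h1, _⟩; exact h1
    · intro h1; exact ⟨h1, T.upperBound r' c h1⟩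
  have hhalf : (2 * m + 1) / 2 = m := by omega
  funext r
  rw [Fshape, hatP]
  by_cases hrm : r < m
  · rw [if_pos hrm]
    have hkey : ∀ c, c < g →
        (cntle T (2 * m) c + r + 1 ≤ (2 * m + 1) / 2 ↔ μ (m - 1 - r) ≤ c) := by
      intro c _
      rw [hcnt c, hhalf]
      constructor
      · intro hle
        by_contra hcon
        push_neg at hcon
        have hsub : Finset.range (m - r) ⊆ (Finset.range m).filter (fun r' => c < μ r') := by
          intro r' hr'
          simp only [Finset.mem_range] at hr'
          simp only [Finset.mem_filter, Finset.mem_range]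
          refine ⟨by omega, ?_⟩
          have := hpart.anti (show r' ≤ m - 1 - r by omega)
          omega
        have := Finset.card_le_card hsub
        rw [Finset.card_range] at this
        omega
      · intro hle
        have hsub : (Finset.range m).filter (fun r' => c < μ r') ⊆
            Finset.range (m - 1 - r) := by
          intro r' hr'
          simp only [Finset.mem_filter, Finset.mem_range] at hr'
          simp only [Finset.mem_range]
          by_contra hcon
          push_neg at hcon
          have := hpart.anti hcon
          omega
        have := Finset.card_le_card hsub
        rw [Finset.card_range] at this
        omega
    have he : (Finset.range g).filter
          (fun c => cntle T (2 * m) c + r + 1 ≤ (2 * m + 1) / 2)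
        = Finset.Ico (μ (m - 1 - r)) g := by
      ext c
      simp only [Finset.mem_filter, Finset.mem_range, Finset.mem_Ico]
      constructor
      · rintro ⟨h1, h2⟩
        exact ⟨(hkey c h1).mp h2, h1⟩
      · rintro ⟨h1, h2⟩
        exact ⟨h2, (hkey c h2).mpr h1⟩
    rw [he, Nat.card_Ico]
  · rw [if_neg hrm]
    apply Finset.card_eq_zero.mpr
    apply Finset.filter_false_of_mem
    intro c _
    omega

lemma Fshape_step_odd (T : King m μ) (hpart : IsPartition μ) (hlen : ∀ i, m ≤ i → μ i = 0)
    (i : ℕ) :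
    (∀ r, Fshape T g (2 * i) r ≤ Fshape T g (2 * i + 1) r) ∧
    (∀ r, Fshape T g (2 * i + 1) (r + 1) ≤ Fshape T g (2 * i) r) := by
  have h1 : (2 * i + 1) / 2 = i := by omega
  have h2 : (2 * i + 1 + 1) / 2 = i + 1 := by omega
  constructor
  · intro r
    apply Finset.card_le_card
    intro c hc
    simp only [Finset.mem_filter] at hc ⊢
    have := cntle_succ T hpart hlen (2 * i) c
    have := cntle_le T (2 * i) c
    refine ⟨hc.1, ?_⟩
    rw [h2]
    rw [h1] at hc
    by_cases hE : hasEntry T c (2 * i + 1) <;> simp [hE] at * <;> omega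
  · intro r
    apply Finset.card_le_card
    intro c hc
    simp only [Finset.mem_filter] at hc ⊢
    have := cntle_mono_v T (show 2 * i ≤ 2 * i + 1 by omega) c
    rw [h2] at hc
    refine ⟨hc.1, ?_⟩
    rw [h1]
    omega

lemma Fshape_step_even (T : King m μ) (hpart : IsPartition μ) (hlen : ∀ i, m ≤ i → μ i = 0)
    (i : ℕ) :
    (∀ r, Fshape T g (2 * i + 2) r ≤ Fshape T g (2 * i + 1) r) ∧
    (∀ r, Fshape T g (2 * i + 1) (r + 1) ≤ Fshape T g (2 * i + 2) r) := by
  have h1 : (2 * i + 1 + 1) / 2 = i + 1 := by omega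
  have h2 : (2 * i + 2 + 1) / 2 = i + 1 := by omega
  constructor
  · intro r
    apply Finset.card_le_card
    intro c hc
    simp only [Finset.mem_filter] at hc ⊢
    have := cntle_mono_v T (show 2 * i + 1 ≤ 2 * i + 2 by omega) c
    rw [h2] at hc
    refine ⟨hc.1, ?_⟩
    rw [h1]
    omega
  · intro r
    apply Finset.card_le_card
    intro c hc
    simp only [Finset.mem_filter] at hc ⊢
    have hs := cntle_succ T hpart hlen (2 * i + 1) c
    rw [show 2 * i + 1 + 1 = 2 * i + 2 by omega] at hs
    rw [h1] at hc
    refine ⟨hc.1, ?_⟩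
    rw [h2]
    by_cases hE : hasEntry T c (2 * i + 2) <;> simp [hE] at hs <;> omega

end KingSide
section Part1
variable {m g : ℕ} {μ : ℕ → ℕ}

lemma SSOT_ext {S1 S2 : SSOT} (h1 : S1.ins = S2.ins) (h2 : S1.rows = S2.rows) : S1 = S2 := by
  cases S1; cases S2; simp_all

lemma isOHS_nil {p : ℕ → ℕ} (hp : IsPartition p) : IsOHS p [] :=
  isOHS_iff.mpr ⟨hp, List.isChain_nil, trivial⟩

/-- the image of a King tableau under `Ψ_{m,g}` -/
noncomputable def PsiS (T : King m μ) (g : ℕ) : SSOT where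
  ins i := Fshape T g (2 * min i m)
  rows i := if i < m then
      canonRows (Fshape T g (2 * i)) (Fshape T g (2 * i + 1)) (Fshape T g (2 * i + 2)) m
    else []

lemma psiS_strip (T : King m μ) (hpart : IsPartition μ)
    (hlen : ∀ i, m ≤ i → μ i = 0) {i : ℕ} (hi : i < m) :
    IsOHS (Fshape T g (2 * i)) ((PsiS T g).rows i) ∧
    outsideOf (Fshape T g (2 * i)) ((PsiS T g).rows i) = Fshape T g (2 * i + 2) ∧
    starOf (Fshape T g (2 * i)) ((PsiS T g).rows i) = Fshape T g (2 * i + 1) ∧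
    (∀ q ∈ partsOf (Fshape T g (2 * i)) ((PsiS T g).rows i), ∀ k,
      q k ≤ Fshape T g (2 * i + 1) k) := by
  have hrows : (PsiS T g).rows i =
      canonRows (Fshape T g (2 * i)) (Fshape T g (2 * i + 1)) (Fshape T g (2 * i + 2)) m := by
    simp only [PsiS, if_pos hi]
  rw [hrows]
  exact build_main m (Fshape_part T g _) (Fshape_part T g _) (Fshape_part T g _)
    (Fshape_step_odd T hpart hlen i).1 (Fshape_step_even T hpart hlen i).1
    (Fshape_step_odd T hpart hlen i).2 (Fshape_step_even T hpart hlen i).2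
    (fun r hr => by
      rw [Fshape_zero_row T g _ (show (2 * i + 1 + 1) / 2 ≤ r by omega),
        Fshape_zero_row T g _ (show (2 * i + 1) / 2 ≤ r by omega)])
    (fun r hr => by
      rw [Fshape_zero_row T g _ (show (2 * i + 1 + 1) / 2 ≤ r by omega),
        Fshape_zero_row T g _ (show (2 * i + 2 + 1) / 2 ≤ r by omega)])

lemma psiS_ins_lt (T : King m μ) {i : ℕ} (hi : i ≤ m) :
    (PsiS T g).ins i = Fshape T g (2 * i) := by
  simp only [PsiS, Nat.min_eq_left hi]

lemma psiS_ins_ge (T : King m μ) {i : ℕ} (hi : m ≤ i) :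
    (PsiS T g).ins i = Fshape T g (2 * m) := by
  simp only [PsiS, Nat.min_eq_right hi]

lemma psiS_mem (T : King m μ) (hm : 1 ≤ m) (hpart : IsPartition μ)
    (hlen : ∀ i, m ≤ i → μ i = 0) (hcol : ∀ i, μ i ≤ g) :
    SSOTmem g m zeroP (hatP m g μ) (PsiS T g) := by
  have hrnil : ∀ i, m ≤ i → (PsiS T g).rows i = [] := by
    intro i hi
    simp only [PsiS, if_neg (by omega : ¬ i < m)]
  refine ⟨⟨?_, ?_, m, hrnil⟩, ?_, ⟨m, ?_⟩, hrnil, ?_⟩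
  · intro i
    rcases Nat.lt_or_ge i m with hi | hi
    · rw [psiS_ins_lt T (le_of_lt hi)]
      exact (psiS_strip T hpart hlen hi).1
    · rw [hrnil i hi, psiS_ins_ge T hi]
      exact isOHS_nil (Fshape_part T g _)
  · intro i
    rcases Nat.lt_or_ge i m with hi | hi
    · rw [psiS_ins_lt T (le_of_lt hi), psiS_ins_lt T (show i + 1 ≤ m by omega),
        (psiS_strip T hpart hlen hi).2.1, show 2 * (i + 1) = 2 * i + 2 by omega]
    · rw [hrnil i hi, psiS_ins_ge T hi, psiS_ins_ge T (by omega)]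
      rfl
  · rw [psiS_ins_lt T (by omega : 0 ≤ m), show 2 * 0 = 0 by omega]
    exact Fshape_v0 T g
  · intro i hi
    rw [psiS_ins_ge T hi]
    exact Fshape_top T hpart hlen hcol
  · intro i q hq
    rcases Nat.lt_or_ge i m with hi | hi
    · rw [psiS_ins_lt T (le_of_lt hi)] at hq
      exact le_trans ((psiS_strip T hpart hlen hi).2.2.2 q hq 0) (Fshape_le_g T g _ 0)
    · rw [hrnil i hi, partsOf_nil, List.mem_singleton] at hq
      subst hq
      rw [psiS_ins_ge T hi]
      exact Fshape_le_g T g _ 0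

lemma psiS_rel (T : King m μ) (hpart : IsPartition μ)
    (hlen : ∀ i, m ≤ i → μ i = 0) : PsiRel m g T (PsiS T g) := by
  intro i hi
  have hins := psiS_ins_lt (g := g) T (le_of_lt hi)
  obtain ⟨hohs, hout, hstar, hbnd⟩ := psiS_strip (g := g) T hpart hlen hi
  rw [hins, hstar, hout]
  refine ⟨Fshape_le_g T g _ 0, ?_⟩
  intro j hj1 hjg
  rw [Fshape_colLen T hj1 hjg, Fshape_colLen T hj1 hjg, Fshape_colLen T hj1 hjg]
  have hh1 : (2 * i + 1) / 2 = i := by omega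
  have hh2 : (2 * i + 1 + 1) / 2 = i + 1 := by omega
  have hh3 : (2 * i + 2 + 1) / 2 = i + 1 := by omega
  have hs1 := cntle_succ T hpart hlen (2 * i) (g - j)
  have hs2 := cntle_succ T hpart hlen (2 * i + 1) (g - j)
  rw [show 2 * i + 1 + 1 = 2 * i + 2 by omega] at hs2
  have hb1 := cntle_le T (2 * i) (g - j)
  have hb2 := cntle_le T (2 * i + 1) (g - j)
  have hb3 := cntle_le T (2 * i + 2) (g - j)
  rw [hh1] at hb1
  rw [hh2] at hb2
  rw [hh3] at hb3
  constructor
  · constructor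
    · intro hcoleq
      by_contra hE
      rw [if_neg hE] at hs1
      omega
    · intro hE
      rw [if_pos hE] at hs1
      omega
  · constructor
    · intro hcoleq
      by_contra hE
      rw [if_neg hE] at hs2
      omega
    · intro hE
      rw [if_pos hE] at hs2
      omega

end Part1
section Part1U
variable {m g : ℕ} {μ : ℕ → ℕ}

lemma psiS_unique (T : King m μ) (hm : 1 ≤ m) (hpart : IsPartition μ)
    (hlen : ∀ i, m ≤ i → μ i = 0) (hcol : ∀ i, μ i ≤ g)
    {S : SSOT} (hmem : SSOTmem g m zeroP (hatP m g μ) S) (hrel : PsiRel m g T S) :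
    S = PsiS T g := by
  obtain ⟨⟨hohs, hchain, -⟩, hins0, houts, hrows0, hcb⟩ := hmem
  have key : ∀ i, i ≤ m → S.ins i = Fshape T g (2 * i) ∧
      ∀ i', i' < i → S.rows i' = (PsiS T g).rows i' := by
    intro i
    induction i with
    | zero =>
      intro _
      refine ⟨?_, fun i' h => absurd h (by omega)⟩
      rw [hins0, show 2 * 0 = 0 by omega, Fshape_v0 T g]
    | succ i ih =>
      intro hi1
      have hi : i < m := by omega
      obtain ⟨hinsi, hrowsi⟩ := ih (by omega)
      have hohsi := hohs i
      rw [hinsi] at hohsi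
      have d := ohs_analyze hohsi
      have hlamp : IsPartition (Fshape T g (2 * i)) := Fshape_part T g _
      obtain ⟨hg0, hiff⟩ := hrel i hi
      rw [hinsi] at hg0 hiff
      -- star agrees with Fshape (2i+1) in column lengths
      have hh1 : (2 * i + 1) / 2 = i := by omega
      have hh2 : (2 * i + 1 + 1) / 2 = i + 1 := by omega
      have hh3 : (2 * i + 2 + 1) / 2 = i + 1 := by omega
      have hstar : starOf (Fshape T g (2 * i)) (S.rows i) = Fshape T g (2 * i + 1) := by
        apply partition_ext_colLen d.star_part (Fshape_part T g _) hg0 (Fshape_le_g T g _ 0)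
        intro j hj1 hjg
        have hmono := colLen_mono_of_le hlamp d.star_part d.le_star hj1
        have hdiff := colLen_diff_le_add hlamp d.star_part d.le_star
          (fun r hr => d.gap_pos r hr) hj1
        have hcll : colLen (Fshape T g (2 * i)) j = i - cntle T (2 * i) (g - j) := by
          rw [Fshape_colLen T hj1 hjg, hh1]
        have hclF : colLen (Fshape T g (2 * i + 1)) j
            = i + 1 - cntle T (2 * i + 1) (g - j) := by
          rw [Fshape_colLen T hj1 hjg, hh2]
        have hs1 := cntle_succ T hpart hlen (2 * i) (g - j)
        have hb1 := cntle_le T (2 * i) (g - j)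
        rw [hh1] at hb1
        have hiff1 := (hiff j hj1 hjg).1
        by_cases hE : hasEntry T (g - j) (2 * i + 1)
        · rw [if_pos hE] at hs1
          rw [hiff1.mpr hE, hcll, hclF]
          omega
        · rw [if_neg hE] at hs1
          have hne : ¬ colLen (starOf (Fshape T g (2 * i)) (S.rows i)) j
              = colLen (Fshape T g (2 * i)) j := fun hx => hE (hiff1.mp hx)
          rw [hclF]
          rw [hcll] at hne
          omega
      have htau : outsideOf (Fshape T g (2 * i)) (S.rows i) = Fshape T g (2 * i + 2) := by
        have htaug : outsideOf (Fshape T g (2 * i)) (S.rows i) 0 ≤ g :=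
          le_trans (d.out_le_star 0) hg0
        apply partition_ext_colLen d.out_part (Fshape_part T g _) htaug (Fshape_le_g T g _ 0)
        intro j hj1 hjg
        have hmono := colLen_mono_of_le d.out_part d.star_part d.out_le_star hj1
        have hdiff := colLen_diff_le_rem d.star_part d.out_part d.out_le_star
          (fun r hr => d.gap_neg r hr) hj1
        rw [hstar] at hmono hdiff
        have hclS : colLen (Fshape T g (2 * i + 1)) j
            = i + 1 - cntle T (2 * i + 1) (g - j) := by
          rw [Fshape_colLen T hj1 hjg, hh2]
        have hclF : colLen (Fshape T g (2 * i + 2)) j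
            = i + 1 - cntle T (2 * i + 2) (g - j) := by
          rw [Fshape_colLen T hj1 hjg, hh3]
        have hs2 := cntle_succ T hpart hlen (2 * i + 1) (g - j)
        rw [show 2 * i + 1 + 1 = 2 * i + 2 by omega] at hs2
        have hb2 := cntle_le T (2 * i + 1) (g - j)
        rw [hh2] at hb2
        have hb3 := cntle_le T (2 * i + 2) (g - j)
        rw [hh3] at hb3
        have hiff2 := (hiff j hj1 hjg).2
        rw [hstar] at hiff2
        by_cases hE : hasEntry T (g - j) (2 * i + 2)
        · rw [if_pos hE] at hs2
          have heq := hiff2.mpr hE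
          rw [hclS] at heq
          rw [hclF]
          omega
        · rw [if_neg hE] at hs2
          have hne : ¬ colLen (Fshape T g (2 * i + 1)) j
              = colLen (outsideOf (Fshape T g (2 * i)) (S.rows i)) j + 1 :=
            fun hx => hE (hiff2.mp hx)
          rw [hclS] at hne
          rw [hclF]
          omega
      obtain ⟨cohs, cout, cstar, -⟩ := psiS_strip (g := g) T hpart hlen hi
      have hrowseq : S.rows i = (PsiS T g).rows i := by
        apply rows_unique hohsi cohs
        · rw [hstar, cstar]
        · rw [htau, cout]
      refine ⟨?_, ?_⟩
      · rw [hchain i, hinsi, htau, show 2 * (i + 1) = 2 * i + 2 by omega]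
      · intro i' hi'
        rcases Nat.lt_or_ge i' i with h | h
        · exact hrowsi i' h
        · have : i' = i := by omega
          subst this
          exact hrowseq
  have htail : ∀ k, S.ins (m + k) = Fshape T g (2 * m) := by
    intro k
    induction k with
    | zero => exact (key m le_rfl).1
    | succ k ihk =>
      have : m + (k + 1) = (m + k) + 1 := by omega
      rw [this, hchain (m + k), hrows0 (m + k) (by omega)]
      exact ihk
  apply SSOT_ext
  · funext i
    rcases Nat.lt_or_ge i m with hi | hi
    · rw [(key i (by omega)).1, psiS_ins_lt T (by omega)]
    · have := htail (i - m)
      rw [show m + (i - m) = i by omega] at this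
      rw [this, psiS_ins_ge T hi]
  · funext i
    rcases Nat.lt_or_ge i m with hi | hi
    · exact (key m le_rfl).2 i hi
    · rw [hrows0 i hi]
      simp only [PsiS, if_neg (by omega : ¬ i < m)]

end Part1U
section Part2A
variable {m g : ℕ} {μ : ℕ → ℕ}

lemma King_ext {T1 T2 : King m μ} (h : T1.entry = T2.entry) : T1 = T2 := by
  cases T1; cases T2; simp_all

lemma hatP_part (hpart : IsPartition μ) (hcol : ∀ i, μ i ≤ g) :
    IsPartition (hatP m g μ) := by
  constructor
  · intro r
    simp only [hatP]
    by_cases h1 : r + 1 < m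
    · rw [if_pos h1, if_pos (by omega)]
      have := hpart.anti (show m - 1 - (r + 1) ≤ m - 1 - r by omega)
      omega
    · rw [if_neg h1]
      omega
  · exact ⟨m, by simp [hatP]⟩

lemma colLen_mu_le (hpart : IsPartition μ) (hlen : ∀ i, m ≤ i → μ i = 0)
    {j : ℕ} (hj : 1 ≤ j) : colLen μ j ≤ m :=
  (colLen_le_iff hpart hj m).mpr (by rw [hlen m le_rfl]; omega)

lemma colLen_hatP (hpart : IsPartition μ) (hlen : ∀ i, m ≤ i → μ i = 0)
    (hcol : ∀ i, μ i ≤ g) {j : ℕ} (hj1 : 1 ≤ j) (hjg : j ≤ g) :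
    colLen (hatP m g μ) j = m - colLen μ (g - j + 1) := by
  have hhp := hatP_part (m := m) hpart hcol
  have hA : colLen μ (g - j + 1) ≤ m := colLen_mu_le hpart hlen (by omega)
  apply nat_eq_of_lt_iff
  intro r
  rw [lt_colLen_iff hhp hj1]
  constructor
  · intro hle
    simp only [hatP] at hle
    by_cases hrm : r < m
    · rw [if_pos hrm] at hle
      have h2 : μ (m - 1 - r) < g - j + 1 := by omega
      have := (colLen_le_iff hpart (by omega) (m - 1 - r)).mpr h2
      omega
    · rw [if_neg hrm] at hle
      omega
  · intro hlt
    have hrm : r < m := by omega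
    simp only [hatP]
    rw [if_pos hrm]
    have h3 : colLen μ (g - j + 1) ≤ m - 1 - r := by omega
    rw [colLen_le_iff hpart (by omega)] at h3
    have := hcol (m - 1 - r)
    omega

/-- number of values in `[1,v]` occurring in column `c` of `T` -/
noncomputable def cntH (T : King m μ) (v c : ℕ) : ℕ :=
  ((Finset.Icc 1 v).filter (fun v' => hasEntry T c v')).card

lemma cntH_succ (T : King m μ) (v c : ℕ) :
    cntH T (v + 1) c = cntH T v c + (if hasEntry T c (v + 1) then 1 else 0) := by
  have hsplit : Finset.Icc 1 (v + 1) = insert (v + 1) (Finset.Icc 1 v) := by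
    ext x
    simp only [Finset.mem_Icc, Finset.mem_insert]
    omega
  rw [cntH, hsplit, Finset.filter_insert]
  by_cases hE : hasEntry T c (v + 1)
  · rw [if_pos hE, if_pos hE, Finset.card_insert_of_notMem (by simp [Finset.mem_filter])]
    rfl
  · rw [if_neg hE, if_neg hE]
    rfl

lemma entry_lt_of_lt_row (T : King m μ) (hpart : IsPartition μ) {r r' c : ℕ}
    (hrr : r < r') (hc' : c < μ r') : T.entry r c < T.entry r' c :=
  entry_strict_col T hpart hrr hc'

lemma king_entry_eq_sInf (T : King m μ) (hpart : IsPartition μ)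
    {r c : ℕ} (hc : c < μ r) :
    T.entry r c = sInf {v | r + 1 ≤ cntH T v c} := by
  set e := T.entry r c with he
  have h1 : r + 1 ≤ cntH T e c := by
    have hsub : ∀ r'' ∈ Finset.range (r + 1),
        T.entry r'' c ∈ (Finset.Icc 1 e).filter (fun v' => hasEntry T c v') := by
      intro r'' hr''
      simp only [Finset.mem_range] at hr''
      have hcr : c < μ r'' := lt_of_lt_of_le hc (hpart.anti (by omega))
      simp only [Finset.mem_filter, Finset.mem_Icc]
      refine ⟨⟨?_, ?_⟩, r'', hcr, rfl⟩
      · have := T.symplectic r'' c hcr; omega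
      · rcases Nat.lt_or_ge r'' r with h | h
        · exact le_of_lt (entry_strict_col T hpart h hc)
        · have : r'' = r := by omega
          subst this; exact le_rfl
    have hinj : Set.InjOn (fun r'' => T.entry r'' c) (Finset.range (r + 1)) := by
      intro a ha b hb hab
      simp only [Finset.coe_range, Set.mem_Iio] at ha hb
      have hab2 : T.entry a c = T.entry b c := hab
      by_contra hne
      rcases Nat.lt_or_ge a b with h | h
      · have := entry_strict_col T hpart h (lt_of_lt_of_le hc (hpart.anti (by omega)))
        omega
      · have := entry_strict_col T hpart (show b < a by omega)
          (lt_of_lt_of_le hc (hpart.anti (by omega)))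
        omega
    calc r + 1 = (Finset.range (r + 1)).card := (Finset.card_range _).symm
    _ ≤ _ := Finset.card_le_card_of_injOn _ hsub hinj
  have h2 : ∀ v, v < e → ¬ (r + 1 ≤ cntH T v c) := by
    intro v hv hcon
    have hwit : ∀ v' ∈ (Finset.Icc 1 v).filter (fun v' => hasEntry T c v'),
        sInf {r' | c < μ r' ∧ T.entry r' c = v'} ∈ Finset.range r := by
      intro v' hv'
      simp only [Finset.mem_filter, Finset.mem_Icc] at hv'
      obtain ⟨⟨_, hv2⟩, r0, hr0c, hr0e⟩ := hv'
      have hne : ({r' | c < μ r' ∧ T.entry r' c = v'} : Set ℕ).Nonempty := ⟨r0, hr0c, hr0e⟩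
      have hmem := Nat.sInf_mem hne
      obtain ⟨hw1, hw2⟩ := hmem
      simp only [Finset.mem_range]
      by_contra hcon2
      push_neg at hcon2
      rcases Nat.eq_or_lt_of_le hcon2 with hx | hx
      · rw [← hx] at hw2
        omega
      · have := entry_strict_col T hpart hx hw1
        omega
    have hinj : Set.InjOn (fun v' => sInf {r' | c < μ r' ∧ T.entry r' c = v'})
        ((Finset.Icc 1 v).filter (fun v' => hasEntry T c v')) := by
      intro a ha b hb hab
      simp only [Finset.coe_filter, Finset.mem_Icc, Set.mem_setOf_eq] at ha hb
      obtain ⟨_, ra, hrac, hrae⟩ := ha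
      obtain ⟨_, rb, hrbc, hrbe⟩ := hb
      have hna : ({r' | c < μ r' ∧ T.entry r' c = a} : Set ℕ).Nonempty := ⟨ra, hrac, hrae⟩
      have hnb : ({r' | c < μ r' ∧ T.entry r' c = b} : Set ℕ).Nonempty := ⟨rb, hrbc, hrbe⟩
      have hma := Nat.sInf_mem hna
      have hmb := Nat.sInf_mem hnb
      simp only at hab
      rw [hab] at hma
      exact hma.2.symm.trans hmb.2
    have hcard := Finset.card_le_card_of_injOn _ hwit hinj
    rw [Finset.card_range] at hcard
    rw [cntH] at hcon
    omega
  have hne : ({v | r + 1 ≤ cntH T v c} : Set ℕ).Nonempty := ⟨e, h1⟩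
  apply le_antisymm
  · by_contra hcon
    push_neg at hcon
    exact h2 _ hcon (Nat.sInf_mem hne)
  · exact Nat.sInf_le h1

lemma hasEntry_out_of_range (T : King m μ) {c v : ℕ} (h : 2 * m < v ∨ v = 0) :
    ¬ hasEntry T c v := by
  rintro ⟨r, hc, he⟩
  have h1 := T.upperBound r c hc
  have h2 := T.symplectic r c hc
  omega

lemma king_unique_of_hasEntry {T1 T2 : King m μ} (hpart : IsPartition μ)
    (h : ∀ c v, hasEntry T1 c v ↔ hasEntry T2 c v) : T1 = T2 := by
  apply King_ext
  funext r c
  by_cases hc : c < μ r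
  · have hH : ∀ v, cntH T1 v c = cntH T2 v c := by
      intro v
      induction v with
      | zero => simp [cntH]
      | succ v ih => rw [cntH_succ, cntH_succ, ih, h c (v + 1)]
    rw [king_entry_eq_sInf T1 hpart hc, king_entry_eq_sInf T2 hpart hc]
    congr 1
    ext v
    simp only [Set.mem_setOf_eq, hH]
  · rw [T1.zeroOutside r c hc, T2.zeroOutside r c hc]

end Part2A
section Part2B
variable {m g : ℕ} {μ : ℕ → ℕ}

lemma star_mem_partsOf {p : ℕ → ℕ} {l : List ℤ} (h : IsOHS p l) :
    starOf p l ∈ partsOf p l := by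
  obtain ⟨hp, hchain, hok⟩ := isOHS_iff.mp h
  have hsplit := sorted_split (List.isChain_iff_pairwise.mp hchain) (okl_mem_ne_zero hok)
  have : partsOf p l = partsOf p (l.filter (fun z => decide (0 < z))
      ++ l.filter (fun z => decide (z < 0))) := by rw [← hsplit]
  rw [this, partsOf, scanl_append]
  exact List.mem_append_left _ (foldl_mem_partsOf _ _)

/-- semistandardized column counts read off from an SSOT -/
noncomputable def cntS (S : SSOT) (g v c : ℕ) : ℕ :=
  if v % 2 = 0 then v / 2 - colLen (S.ins (v / 2)) (g - c)
  else (v + 1) / 2 - colLen (starOf (S.ins (v / 2)) (S.rows (v / 2))) (g - c)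

lemma part2_exists (hm : 1 ≤ m) (hg : 1 ≤ g) (hpart : IsPartition μ)
    (hlen : ∀ i, m ≤ i → μ i = 0) (hcol : ∀ i, μ i ≤ g)
    {S : SSOT} (hmem : SSOTmem g m zeroP (hatP m g μ) S) :
    ∃ T : King m μ, PsiRel m g T S := by
  obtain ⟨⟨hohs, hchain, -⟩, hins0, houts, hrows0, hcb⟩ := hmem
  have hinsp : ∀ i, IsPartition (S.ins i) := fun i => (hohs i).1
  have d : ∀ i, OHSdata (S.ins i) (S.rows i) := fun i => ohs_analyze (hohs i)
  -- row bounds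
  have hbd : ∀ i, ∀ r, i ≤ r → S.ins i r = 0 := by
    intro i
    induction i with
    | zero => intro r _; rw [hins0]; rfl
    | succ i ih =>
      intro r hr
      have hstar0 : starOf (S.ins i) (S.rows i) r = 0 := by
        obtain ⟨r', rfl⟩ : ∃ r', r = r' + 1 := ⟨r - 1, by omega⟩
        rcases Nat.lt_or_ge (S.ins i (r' + 1)) (starOf (S.ins i) (S.rows i) (r' + 1))
          with h | h
        · have h1 := (d i).gap_pos r' h
          have h2 := ih r' (by omega)
          omega
        · have h2 := ih (r' + 1) (by omega)
          omega
      rw [hchain i]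
      have := (d i).out_le_star r
      omega
  have hstarbd : ∀ i r, i + 1 ≤ r → starOf (S.ins i) (S.rows i) r = 0 := by
    intro i r hr
    obtain ⟨r', rfl⟩ : ∃ r', r = r' + 1 := ⟨r - 1, by omega⟩
    rcases Nat.lt_or_ge (S.ins i (r' + 1)) (starOf (S.ins i) (S.rows i) (r' + 1)) with h | h
    · have h1 := (d i).gap_pos r' h
      have h2 := hbd i r' (by omega)
      omega
    · have h2 := hbd i (r' + 1) (by omega)
      omega
  have hclins : ∀ i j, 1 ≤ j → colLen (S.ins i) j ≤ i := fun i j hj =>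
    (colLen_le_iff (hinsp i) hj i).mpr (by rw [hbd i i le_rfl]; omega)
  have hclstar : ∀ i j, 1 ≤ j → colLen (starOf (S.ins i) (S.rows i)) j ≤ i + 1 :=
    fun i j hj =>
    (colLen_le_iff (d i).star_part hj (i + 1)).mpr (by rw [hstarbd i (i + 1) le_rfl]; omega)
  -- ins m = hatP
  have hconst : ∀ k, S.ins (m + k) = S.ins m := by
    intro k
    induction k with
    | zero => rfl
    | succ k ihk =>
      have he : m + (k + 1) = (m + k) + 1 := by omega
      rw [he, hchain (m + k), hrows0 (m + k) (by omega)]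
      exact ihk
  have hinsm : S.ins m = hatP m g μ := by
    obtain ⟨N, hN⟩ := houts
    have h1 := hN (m + N) (by omega)
    rw [hconst N] at h1
    exact h1
  -- cntS computations
  have hcnteven : ∀ i c, cntS S g (2 * i) c = i - colLen (S.ins i) (g - c) := by
    intro i c
    rw [cntS, if_pos (by omega : (2 * i) % 2 = 0), (by omega : (2 * i) / 2 = i)]
  have hcntodd : ∀ i c, cntS S g (2 * i + 1) c
      = (i + 1) - colLen (starOf (S.ins i) (S.rows i)) (g - c) := by
    intro i c
    rw [cntS, if_neg (by omega : ¬ (2 * i + 1) % 2 = 0),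
      (by omega : (2 * i + 1) / 2 = i), (by omega : (2 * i + 1 + 1) / 2 = i + 1)]
  have hcnt0 : ∀ c, cntS S g 0 c = 0 := by
    intro c
    have h00 := hcnteven 0 c
    rw [show 2 * 0 = 0 by omega] at h00
    rw [h00]
    omega
  have hstep1 : ∀ i c, c < g →
      cntS S g (2 * i) c ≤ cntS S g (2 * i + 1) c ∧
      cntS S g (2 * i + 1) c ≤ cntS S g (2 * i) c + 1 ∧
      (cntS S g (2 * i + 1) c = cntS S g (2 * i) c + 1 ↔
        colLen (starOf (S.ins i) (S.rows i)) (g - c) = colLen (S.ins i) (g - c)) := by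
    intro i c hc
    have hj1 : 1 ≤ g - c := by omega
    have hmono := colLen_mono_of_le (hinsp i) (d i).star_part (d i).le_star hj1
    have hdiff := colLen_diff_le_add (hinsp i) (d i).star_part (d i).le_star
      (fun r hr => (d i).gap_pos r hr) hj1
    have hbi := hclins i (g - c) hj1
    have hbs := hclstar i (g - c) hj1
    rw [hcnteven, hcntodd]
    omega
  have hstep2 : ∀ i c, c < g →
      cntS S g (2 * i + 1) c ≤ cntS S g (2 * i + 2) c ∧
      cntS S g (2 * i + 2) c ≤ cntS S g (2 * i + 1) c + 1 ∧
      (cntS S g (2 * i + 2) c = cntS S g (2 * i + 1) c + 1 ↔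
        colLen (starOf (S.ins i) (S.rows i)) (g - c)
          = colLen (outsideOf (S.ins i) (S.rows i)) (g - c) + 1) := by
    intro i c hc
    have hj1 : 1 ≤ g - c := by omega
    have hmono := colLen_mono_of_le (d i).out_part (d i).star_part (d i).out_le_star hj1
    have hdiff := colLen_diff_le_rem (d i).star_part (d i).out_part (d i).out_le_star
      (fun r hr => (d i).gap_neg r hr) hj1
    have hbs := hclstar i (g - c) hj1
    have h2e : cntS S g (2 * i + 2) c
        = (i + 1) - colLen (outsideOf (S.ins i) (S.rows i)) (g - c) := by
      rw [show 2 * i + 2 = 2 * (i + 1) by omega, hcnteven, hchain i]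
    rw [hcntodd, h2e]
    omega
  have hstep : ∀ v c, c < g → cntS S g v c ≤ cntS S g (v + 1) c ∧
      cntS S g (v + 1) c ≤ cntS S g v c + 1 := by
    intro v c hc
    rcases Nat.even_or_odd v with ⟨i, hi⟩ | ⟨i, hi⟩
    · rw [show v = 2 * i by omega]
      exact ⟨(hstep1 i c hc).1, (hstep1 i c hc).2.1⟩
    · rw [show v = 2 * i + 1 by omega, show 2 * i + 1 + 1 = 2 * i + 2 by omega]
      exact ⟨(hstep2 i c hc).1, (hstep2 i c hc).2.1⟩
  have hmonoS : ∀ v v' c, c < g → v ≤ v' → cntS S g v c ≤ cntS S g v' c := by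
    intro v v' c hc h
    induction v' with
    | zero =>
      have : v = 0 := by omega
      subst this; exact le_rfl
    | succ v' ih =>
      rcases Nat.lt_or_ge v (v' + 1) with h1 | h1
      · exact le_trans (ih (by omega)) (hstep v' c hc).1
      · have : v = v' + 1 := by omega
        subst this; exact le_rfl
  have hcnt_le : ∀ v c, cntS S g v c ≤ (v + 1) / 2 := by
    intro v c
    rw [cntS]
    split <;> omega
  have hanti : ∀ v c c', c ≤ c' → c' < g → cntS S g v c' ≤ cntS S g v c := by
    intro v c c' hcc hcg
    rw [cntS, cntS]
    have h1 : 1 ≤ g - c' := by omega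
    have h2 : g - c' ≤ g - c := by omega
    split
    · have := colLen_anti (hinsp (v / 2)) h1 h2
      omega
    · have := colLen_anti ((d (v / 2)).star_part) h1 h2
      omega
  have htop : ∀ c, c < g → cntS S g (2 * m) c = colLen μ (c + 1) := by
    intro c hc
    rw [hcnteven m c, hinsm, colLen_hatP hpart hlen hcol (by omega) (by omega),
      show g - (g - c) + 1 = c + 1 by omega]
    have := colLen_mu_le (m := m) hpart hlen (show 1 ≤ c + 1 by omega)
    omega
  -- the entry function
  set E : ℕ → ℕ → ℕ :=
    fun r c => if c < μ r then sInf {v | r + 1 ≤ cntS S g v c} else 0 with hEdef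
  have hcell : ∀ r c, c < μ r →
      1 ≤ E r c ∧ E r c ≤ 2 * m ∧ 2 * r + 1 ≤ E r c ∧
      cntS S g (E r c - 1) c = r ∧ cntS S g (E r c) c = r + 1 := by
    intro r c hcμ
    have hcg : c < g := lt_of_lt_of_le hcμ (hcol r)
    have hrm : r < m := by
      by_contra hcon
      push_neg at hcon
      rw [hlen r hcon] at hcμ
      omega
    have hrcol : r < colLen μ (c + 1) := (lt_colLen_iff hpart (by omega) r).mpr hcμ
    have hWtop : (2 * m) ∈ {v | r + 1 ≤ cntS S g v c} := by
      simp only [Set.mem_setOf_eq, htop c hcg]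
      omega
    have hne : ({v | r + 1 ≤ cntS S g v c} : Set ℕ).Nonempty := ⟨2 * m, hWtop⟩
    have hEeq : E r c = sInf {v | r + 1 ≤ cntS S g v c} := by
      simp only [hEdef, if_pos hcμ]
    have hmem : r + 1 ≤ cntS S g (sInf {v | r + 1 ≤ cntS S g v c}) c := Nat.sInf_mem hne
    have hmin : ∀ v, v < sInf {v | r + 1 ≤ cntS S g v c} → cntS S g v c ≤ r := by
      intro v hv
      by_contra hcon
      push_neg at hcon
      exact absurd (Nat.sInf_le (show v ∈ {v | r + 1 ≤ cntS S g v c} from hcon)) (by omega)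
    rw [hEeq]
    set e := sInf {v | r + 1 ≤ cntS S g v c} with hee
    have he1 : 1 ≤ e := by
      by_contra hcon
      push_neg at hcon
      have : e = 0 := by omega
      rw [this, hcnt0 c] at hmem
      omega
    have he2m : e ≤ 2 * m := Nat.sInf_le hWtop
    have hlow : cntS S g (e - 1) c ≤ r := hmin (e - 1) (by omega)
    have hup := (hstep (e - 1) c hcg).2
    rw [show e - 1 + 1 = e by omega] at hup
    have hsym : 2 * r + 1 ≤ e := by
      have := hcnt_le e c
      omega
    exact ⟨he1, he2m, hsym, by omega, by omega⟩
  -- King structure fields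
  have hW : ∀ r c, c + 1 < μ r → E r c ≤ E r (c + 1) := by
    intro r c h
    have hc1 : c + 1 < μ r := h
    have hcμ : c < μ r := by omega
    have hcg1 : c + 1 < g := lt_of_lt_of_le hc1 (hcol r)
    have h4 := (hcell r (c + 1) hc1).2.2.2.2
    have h5 := hanti (E r (c + 1)) c (c + 1) (by omega) hcg1
    have hEeq : E r c = sInf {v | r + 1 ≤ cntS S g v c} := by
      simp only [hEdef, if_pos hcμ]
    rw [hEeq]
    exact Nat.sInf_le (show E r (c + 1) ∈ {v | r + 1 ≤ cntS S g v c} from by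
      simp only [Set.mem_setOf_eq]; omega)
  have hSt : ∀ r c, c < μ (r + 1) → E r c < E (r + 1) c := by
    intro r c h
    have hcμ : c < μ r := lt_of_lt_of_le h (hpart.1 r)
    have hcg : c < g := lt_of_lt_of_le h (hcol (r + 1))
    have h1 := (hcell r c hcμ).2.2.2.2
    have h2 := (hcell (r + 1) c h).2.2.2.2
    by_contra hcon
    push_neg at hcon
    have := hmonoS (E (r + 1) c) (E r c) c hcg hcon
    omega
  have hSym : ∀ r c, c < μ r → 2 * r + 1 ≤ E r c := fun r c hc => (hcell r c hc).2.2.1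
  have hUB : ∀ r c, c < μ r → E r c ≤ 2 * m := fun r c hc => (hcell r c hc).2.1
  have hZ : ∀ r c, ¬ c < μ r → E r c = 0 := by
    intro r c hc
    simp only [hEdef, if_neg hc]
  refine ⟨⟨E, hW, hSt, hSym, hUB, hZ⟩, ?_⟩
  set Tc : King m μ := ⟨E, hW, hSt, hSym, hUB, hZ⟩ with hTc
  -- characterization of hasEntry
  have hHE : ∀ c v, c < g → 1 ≤ v → v ≤ 2 * m →
      (hasEntry Tc c v ↔ cntS S g v c = cntS S g (v - 1) c + 1) := by
    intro c v hcg hv1 hv2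
    constructor
    · rintro ⟨r, hrc, hre⟩
      have h1 := (hcell r c hrc).2.2.2.1
      have h2 := (hcell r c hrc).2.2.2.2
      have hre' : E r c = v := hre
      rw [hre'] at h1 h2
      omega
    · intro hstepv
      set r := cntS S g (v - 1) c with hr
      have hrcol : r < colLen μ (c + 1) := by
        have hle2 := hmonoS v (2 * m) c hcg hv2
        rw [htop c hcg] at hle2
        omega
      have hcμ : c < μ r := by
        have := (lt_colLen_iff hpart (show 1 ≤ c + 1 by omega) r).mp hrcol
        omega
      refine ⟨r, hcμ, ?_⟩
      have hEeq : E r c = sInf {v | r + 1 ≤ cntS S g v c} := by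
        simp only [hEdef, if_pos hcμ]
      have hvin : v ∈ {v' | r + 1 ≤ cntS S g v' c} := by
        simp only [Set.mem_setOf_eq]
        omega
      have hvmin : ∀ v', v' < v → v' ∉ {v' | r + 1 ≤ cntS S g v' c} := by
        intro v' hv'
        simp only [Set.mem_setOf_eq, not_le]
        have := hmonoS v' (v - 1) c hcg (by omega)
        omega
      show E r c = v
      rw [hEeq]
      apply le_antisymm (Nat.sInf_le hvin)
      by_contra hcon
      push_neg at hcon
      exact hvmin _ hcon (Nat.sInf_mem ⟨v, hvin⟩)
  -- PsiRel
  intro i hi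
  constructor
  · exact hcb i _ (star_mem_partsOf (hohs i)) 
  · intro j hj1 hjg
    have hcg : g - j < g := by omega
    have hgj : g - (g - j) = j := by omega
    constructor
    · have hiff := (hstep1 i (g - j) hcg).2.2
      have hhe := hHE (g - j) (2 * i + 1) hcg (by omega) (by omega)
      rw [show 2 * i + 1 - 1 = 2 * i by omega] at hhe
      rw [hgj] at hiff
      rw [← hiff, ← hhe]
    · have hiff := (hstep2 i (g - j) hcg).2.2
      have hhe := hHE (g - j) (2 * i + 2) hcg (by omega) (by omega)
      rw [show 2 * i + 2 - 1 = 2 * i + 1 by omega] at hhe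
      rw [hgj] at hiff
      rw [← hiff, ← hhe]

lemma part2_unique (hpart : IsPartition μ) (hcol : ∀ i, μ i ≤ g) (hm : 1 ≤ m)
    {S : SSOT} {T1 T2 : King m μ}
    (h1 : PsiRel m g T1 S) (h2 : PsiRel m g T2 S) : T1 = T2 := by
  apply king_unique_of_hasEntry hpart
  intro c v
  by_cases hcg : c < g
  · by_cases hv : 1 ≤ v ∧ v ≤ 2 * m
    · have hgc : g - (g - c) = c := by omega
      have hj1 : 1 ≤ g - c := by omega
      have hjg : g - c ≤ g := by omega
      rcases Nat.even_or_odd v with ⟨i, hi⟩ | ⟨i, hi⟩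
      · -- v = 2i even, v ≥ 1 so i ≥ 1; v = 2(i-1)+2
        have hv2 : v = 2 * (i - 1) + 2 := by omega
        have him : i - 1 < m := by omega
        have e1 := ((h1 (i - 1) him).2 (g - c) hj1 hjg).2
        have e2 := ((h2 (i - 1) him).2 (g - c) hj1 hjg).2
        rw [hgc] at e1 e2
        rw [hv2, ← e1, ← e2]
      · have hv2 : v = 2 * i + 1 := by omega
        have him : i < m := by omega
        have e1 := ((h1 i him).2 (g - c) hj1 hjg).1
        have e2 := ((h2 i him).2 (g - c) hj1 hjg).1
        rw [hgc] at e1 e2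
        rw [hv2, ← e1, ← e2]
    · have hv' : 2 * m < v ∨ v = 0 := by omega
      constructor <;> intro hx
      · exact absurd hx (hasEntry_out_of_range T1 hv')
      · exact absurd hx (hasEntry_out_of_range T2 hv')
  · constructor <;>
      (rintro ⟨r, hr, he⟩; exact absurd (lt_of_lt_of_le hr (hcol r)) hcg)

end Part2B
section Part3
variable {m g : ℕ} {μ : ℕ → ℕ}

lemma Fshape_sum (T : King m μ) {v : ℕ} (hv : (v + 1) / 2 ≤ m) :
    ∑ r ∈ Finset.range m, Fshape T g v r
      = ∑ c ∈ Finset.range g, ((v + 1) / 2 - cntle T v c) := by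
  have h1 : ∀ r, Fshape T g v r
      = ∑ c ∈ Finset.range g, if cntle T v c + r + 1 ≤ (v + 1) / 2 then 1 else 0 := by
    intro r
    rw [Fshape, Finset.card_filter]
  rw [Finset.sum_congr rfl (fun r _ => h1 r), Finset.sum_comm]
  apply Finset.sum_congr rfl
  intro c _
  rw [← Finset.card_filter]
  have he : (Finset.range m).filter (fun r => cntle T v c + r + 1 ≤ (v + 1) / 2)
      = Finset.range ((v + 1) / 2 - cntle T v c) := by
    ext r
    simp only [Finset.mem_filter, Finset.mem_range]
    omega
  rw [he, Finset.card_range]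

lemma countEntry_eq_cols (T : King m μ) (hpart : IsPartition μ)
    (hlen : ∀ i, m ≤ i → μ i = 0) (hcol : ∀ i, μ i ≤ g) (v : ℕ) :
    countEntry m g T v = ((Finset.range g).filter (fun c => hasEntry T c v)).card := by
  rw [countEntry]
  apply Finset.card_bij (fun rc _ => rc.2)
  · intro rc hrc
    simp only [Finset.mem_filter, Finset.mem_product, Finset.mem_range] at hrc
    simp only [Finset.mem_filter, Finset.mem_range]
    exact ⟨hrc.1.2, rc.1, hrc.2.1, hrc.2.2⟩
  · intro a ha b hb hab
    simp only [Finset.mem_filter, Finset.mem_product, Finset.mem_range] at ha hb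
    have hc : a.2 = b.2 := hab
    have hr : a.1 = b.1 := by
      by_contra hne
      rw [← hc] at hb
      rcases Nat.lt_or_ge a.1 b.1 with h | h
      · have := entry_strict_col T hpart h hb.2.1
        omega
      · have := entry_strict_col T hpart (show b.1 < a.1 by omega) ha.2.1
        omega
    exact Prod.ext hr hc
  · intro c hc
    simp only [Finset.mem_filter, Finset.mem_range] at hc
    obtain ⟨hcg, r, hrc, hre⟩ := hc
    have hrm : r < m := by
      by_contra hcon
      push_neg at hcon
      rw [hlen r hcon] at hrc
      omega
    refine ⟨(r, c), ?_, rfl⟩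
    simp only [Finset.mem_filter, Finset.mem_product, Finset.mem_range]
    exact ⟨⟨hrm, hcg⟩, hrc, hre⟩

lemma part3_weight (T : King m μ) (hm : 1 ≤ m) (hpart : IsPartition μ)
    (hlen : ∀ i, m ≤ i → μ i = 0) (hcol : ∀ i, μ i ≤ g) {i : ℕ} (hi : i < m) :
    kingWt m g T i = cwt g (PsiS T g) i := by
  have hh1 : (2 * i + 1) / 2 = i := by omega
  have hh2 : (2 * i + 1 + 1) / 2 = i + 1 := by omega
  have hh3 : (2 * i + 2 + 1) / 2 = i + 1 := by omega
  have hrowsi : (PsiS T g).rows i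
      = canonRows (Fshape T g (2 * i)) (Fshape T g (2 * i + 1)) (Fshape T g (2 * i + 2)) m := by
    simp only [PsiS, if_pos hi]
  have hL : ((PsiS T g).rows i).length
      = (∑ r ∈ Finset.range m, (Fshape T g (2 * i + 1) r - Fshape T g (2 * i) r))
        + ∑ r ∈ Finset.range m, (Fshape T g (2 * i + 1) r - Fshape T g (2 * i + 2) r) := by
    rw [hrowsi, canonRows, List.length_append, addRows_length, remRows_length]
  -- sums of differences
  have hsl := (Fshape_step_odd (g := g) T hpart hlen i).1
  have hst2 := (Fshape_step_even (g := g) T hpart hlen i).1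
  have hsub1 : ∑ r ∈ Finset.range m, (Fshape T g (2 * i + 1) r - Fshape T g (2 * i) r)
      = (∑ r ∈ Finset.range m, Fshape T g (2 * i + 1) r)
        - ∑ r ∈ Finset.range m, Fshape T g (2 * i) r := by
    rw [Finset.sum_tsub_distrib]
    intro r _
    exact hsl r
  have hsub2 : ∑ r ∈ Finset.range m, (Fshape T g (2 * i + 1) r - Fshape T g (2 * i + 2) r)
      = (∑ r ∈ Finset.range m, Fshape T g (2 * i + 1) r)
        - ∑ r ∈ Finset.range m, Fshape T g (2 * i + 2) r := by
    rw [Finset.sum_tsub_distrib]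
    intro r _
    exact hst2 r
  set s1 := ∑ c ∈ Finset.range g, (i - cntle T (2 * i) c) with hs1
  set s2 := ∑ c ∈ Finset.range g, (i + 1 - cntle T (2 * i + 1) c) with hs2
  set s3 := ∑ c ∈ Finset.range g, (i + 1 - cntle T (2 * i + 2) c) with hs3
  have hsum1 : ∑ r ∈ Finset.range m, Fshape T g (2 * i) r = s1 := by
    rw [Fshape_sum T (by omega), hh1]
  have hsum2 : ∑ r ∈ Finset.range m, Fshape T g (2 * i + 1) r = s2 := by
    rw [Fshape_sum T (by omega), hh2]
  have hsum3 : ∑ r ∈ Finset.range m, Fshape T g (2 * i + 2) r = s3 := by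
    rw [Fshape_sum T (by omega), hh3]
  set A := ((Finset.range g).filter (fun c => hasEntry T c (2 * i + 1))).card with hA
  set B := ((Finset.range g).filter (fun c => hasEntry T c (2 * i + 2))).card with hB
  have hAsum : A = ∑ c ∈ Finset.range g, if hasEntry T c (2 * i + 1) then 1 else 0 := by
    rw [hA, Finset.card_filter]
  have hBsum : B = ∑ c ∈ Finset.range g, if hasEntry T c (2 * i + 2) then 1 else 0 := by
    rw [hB, Finset.card_filter]
  have hkey1 : s2 + A = s1 + g := by
    have hcong : ∀ c ∈ Finset.range g,
        (i + 1 - cntle T (2 * i + 1) c) + (if hasEntry T c (2 * i + 1) then 1 else 0)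
          = (i - cntle T (2 * i) c) + 1 := by
      intro c _
      have hsucc := cntle_succ T hpart hlen (2 * i) c
      have hb1 := cntle_le T (2 * i) c
      rw [hh1] at hb1
      by_cases hE : hasEntry T c (2 * i + 1)
      · rw [if_pos hE]; rw [if_pos hE] at hsucc; omega
      · rw [if_neg hE]; rw [if_neg hE] at hsucc; omega
    have hsumeq := Finset.sum_congr rfl hcong
    rw [Finset.sum_add_distrib, Finset.sum_add_distrib, Finset.sum_const, Finset.card_range,
      smul_eq_mul, mul_one] at hsumeq
    rw [hs1, hs2, hAsum]
    exact hsumeq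
  have hkey2 : s3 + B = s2 := by
    have hcong : ∀ c ∈ Finset.range g,
        (i + 1 - cntle T (2 * i + 2) c) + (if hasEntry T c (2 * i + 2) then 1 else 0)
          = (i + 1 - cntle T (2 * i + 1) c) := by
      intro c _
      have hsucc := cntle_succ T hpart hlen (2 * i + 1) c
      rw [show 2 * i + 1 + 1 = 2 * i + 2 by omega] at hsucc
      have hb3 := cntle_le T (2 * i + 2) c
      rw [hh3] at hb3
      by_cases hE : hasEntry T c (2 * i + 2)
      · rw [if_pos hE]; rw [if_pos hE] at hsucc; omega
      · rw [if_neg hE]; rw [if_neg hE] at hsucc; omega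
    have hsumeq := Finset.sum_congr rfl hcong
    rw [Finset.sum_add_distrib] at hsumeq
    rw [hs2, hs3, hBsum]
    exact hsumeq
  have hAg : A ≤ g := by
    rw [hA]
    calc _ ≤ (Finset.range g).card := Finset.card_le_card (Finset.filter_subset _ _)
    _ = g := Finset.card_range _
  have hs12 : s1 ≤ s2 := by
    rw [← hsum1, ← hsum2]
    exact Finset.sum_le_sum (fun r _ => hsl r)
  have hs32 : s3 ≤ s2 := by
    rw [← hsum2, ← hsum3]
    exact Finset.sum_le_sum (fun r _ => hst2 r)
  rw [kingWt, cwt, countEntry_eq_cols T hpart hlen hcol, countEntry_eq_cols T hpart hlen hcol,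
    ← hA, ← hB, hL, hsub1, hsub2, hsum1, hsum2, hsum3]
  omega

end Part3
/-- Theorem `main1`: for a partition `μ` with at most `m` parts, each
part at most `g`, the correspondence `Ψ_{m,g}` is a crystal-weight-preserving bijection
from `K(μ,m)` onto `SSOT_g(μ̂,m)`. -/
theorem king_ssot_bijection (m g : ℕ) (hm : 1 ≤ m) (hg : 1 ≤ g) (μ : ℕ → ℕ)
    (hpart : IsPartition μ) (hlen : ∀ i, m ≤ i → μ i = 0) (hcol : ∀ i, μ i ≤ g) :
    (∀ T : King m μ, ∃! S : SSOT, SSOTmem g m zeroP (hatP m g μ) S ∧ PsiRel m g T S) ∧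
    (∀ S : SSOT, SSOTmem g m zeroP (hatP m g μ) S → ∃! T : King m μ, PsiRel m g T S) ∧
    (∀ (T : King m μ) (S : SSOT), SSOTmem g m zeroP (hatP m g μ) S → PsiRel m g T S →
      ∀ i, i < m → kingWt m g T i = cwt g S i) := by
  refine ⟨?_, ?_, ?_⟩
  · intro T
    exact ⟨PsiS T g, ⟨psiS_mem T hm hpart hlen hcol, psiS_rel T hpart hlen⟩,
      fun S hS => psiS_unique T hm hpart hlen hcol hS.1 hS.2⟩
  · intro S hS
    obtain ⟨T, hT⟩ := part2_exists hm hg hpart hlen hcol hS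
    exact ⟨T, hT, fun T' hT' => part2_unique hpart hcol hm hT' hT⟩
  · intro T S hS hrel i hi
    rw [psiS_unique T hm hpart hlen hcol hS hrel]
    exact part3_weight T hm hpart hlen hcol hi

end KingSSOT
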